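/- arXiv:1212.5698 — 4 statements merged into one kernel-verified Lean document; each statement's English description precedes it below -/
import Mathlib

section
/- For every morphism φ: T → Bir(P^n) from a k-variety T, there exists a finite stratification T = V_1 ∪ ⋯ ∪ V_ℓ by pairwise disjoint locally closed subsets such that the function t ↦ deg(φ_t) is constant on each V_j, j = 1,…,ℓ. -/
open MvPolynomial

/-- The rational function field `k(z_1,…,z_n)`, realized as the fraction field of the
polynomial ring in `n` variables over `k`. -/
abbrev RatFunField (k : Type) [Field k] (n : ℕ) : Type :=
  FractionRing (MvPolynomial (Fin n) k)

/-- The Cremona group `Bir(ℙⁿ)`, realized as the group of `k`-algebra automorphisms of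
the rational function field `k(z_1,…,z_n)`. -/
abbrev Cremona (k : Type) [Field k] (n : ℕ) : Type :=
  RatFunField k n ≃ₐ[k] RatFunField k n

variable (k : Type) [Field k]

/-- The coordinate function `z_{j+1}` of `k(z_1,…,z_n)`. -/
noncomputable def zCoord (n : ℕ) (j : Fin n) : RatFunField k n :=
  algebraMap (MvPolynomial (Fin n) k) (RatFunField k n) (X j)

/-- Dehomogenization: `g(x_0,…,x_n) ↦ g(1, z_1, …, z_n)`. -/
noncomputable def dehom (n : ℕ) : MvPolynomial (Fin (n + 1)) k →ₐ[k] RatFunField k n :=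
  aeval (Fin.cons 1 (zCoord k n))

/-- `g = (g_0,…,g_n)` is a representation of the Cremona transformation `f` by homogeneous
polynomials of degree `d`: the `g_i` are homogeneous of degree `d`, `g_0 ≠ 0`, and
`f(z_j) = g_j(1,z_1,…,z_n)/g_0(1,z_1,…,z_n)` for all `j`. -/
def Represents (n : ℕ) (f : Cremona k n) (d : ℕ)
    (g : Fin (n + 1) → MvPolynomial (Fin (n + 1)) k) : Prop :=
  (∀ i, (g i).IsHomogeneous d) ∧ g 0 ≠ 0 ∧
    ∀ j : Fin n, f (zCoord k n j) * dehom k n (g 0) = dehom k n (g j.succ)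

/-- The (algebraic) degree of a Cremona transformation: the least `d ≥ 1` such that `f`
admits a representation by homogeneous polynomials of degree `d` (without common factor,
which is automatic at the minimal degree). -/
noncomputable def cdeg (n : ℕ) (f : Cremona k n) : ℕ :=
  sInf {d | 1 ≤ d ∧ ∃ g, Represents k n f d g}

/-- An affine `k`-variety: the maximal spectrum (= set of `k`-points) of a finitely
generated `k`-algebra `A`. -/
structure AffSource (k : Type) [Field k] : Type 1 where
  A : Type
  [cr : CommRing A]
  [alg : Algebra k A]
  [ft : Algebra.FiniteType k A]

attribute [instance] AffSource.cr AffSource.alg AffSource.ft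

/-- The points (with residue field `k`) of an affine `k`-variety, i.e. the `k`-algebra
homomorphisms `A → k`; by the Nullstellensatz these correspond to the maximal ideals. -/
abbrev AffSource.Pts (S : AffSource k) : Type := S.A →ₐ[k] k

/-- The Zariski topology on the points of an affine variety, induced from the Zariski
topology of the prime spectrum via `t ↦ ker t`. -/
noncomputable instance AffSource.ptsTopology (S : AffSource k) : TopologicalSpace S.Pts :=
  TopologicalSpace.induced
    (fun t : S.Pts =>
      (⟨RingHom.ker (t : S.A →+* k), RingHom.ker_isPrime _⟩ : PrimeSpectrum S.A))
    inferInstance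

/-- `φ` is given by the polynomial family `F = (F_0,…,F_n)`, homogeneous of common degree
`ℓ` in `x_0,…,x_n` with coefficients in `A`, on the basic open subset `D(a)`: for every
point `t` with `a(t) ≠ 0`, the evaluated polynomials `F_i(t,·)` are not all zero and
`φ_t(z_j)·F_0(t,1,z_1,…,z_n) = F_j(t,1,z_1,…,z_n)` for all `j`. -/
def IsFamilyOn (n : ℕ) (S : AffSource k) (φ : S.Pts → Cremona k n) (a : S.A)
    (ℓ : ℕ) (F : Fin (n + 1) → MvPolynomial (Fin (n + 1)) S.A) : Prop :=
  (∀ i, (F i).IsHomogeneous ℓ) ∧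
    ∀ t : S.Pts, t a ≠ 0 →
      (∃ i, MvPolynomial.map (t : S.A →+* k) (F i) ≠ 0) ∧
        ∀ j : Fin n,
          φ t (zCoord k n j) * dehom k n (MvPolynomial.map (t : S.A →+* k) (F 0)) =
            dehom k n (MvPolynomial.map (t : S.A →+* k) (F j.succ))

/-- A morphism `T → Bir(ℙⁿ)` from an affine `k`-variety `T`: a map which, locally on a
cover of `T` by basic open subsets, is given by a polynomial family of Cremona
transformations. -/
def IsMorphism (n : ℕ) (S : AffSource k) (φ : S.Pts → Cremona k n) : Prop :=
  ∀ t : S.Pts, ∃ a : S.A, t a ≠ 0 ∧ ∃ ℓ F, IsFamilyOn k n S φ a ℓ F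

/-- The Zariski topology on the Cremona group: the finest topology making every morphism
from a `k`-variety to `Bir(ℙⁿ)` continuous.  (A subset is closed if and only if its
preimage under every such morphism is closed.) -/
noncomputable instance cremonaTopology (n : ℕ) : TopologicalSpace (Cremona k n) :=
  ⨆ (S : AffSource k) (φ : { φ : S.Pts → Cremona k n // IsMorphism k n S φ }),
    TopologicalSpace.coinduced φ.1 inferInstance


/-! ### Auxiliary lemmas -/

section AuxLinearAlgebra

open Matrix in
theorem aux_minors {ι κ : Type*} [Fintype ι] [Fintype κ] [DecidableEq ι] [DecidableEq κ]
    {K : Type} [Field K] (M : Matrix ι κ K) :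
    (∃ c ≠ 0, M.mulVec c = 0) ↔ ∀ r : κ → ι, (M.submatrix r id).det = 0 := by
  constructor
  · rintro ⟨c, hc, hMc⟩ r
    rw [← Matrix.exists_mulVec_eq_zero_iff]
    refine ⟨c, hc, ?_⟩
    ext x
    have : (M.submatrix r id).mulVec c x = M.mulVec c (r x) := by
      simp [Matrix.mulVec, dotProduct]
    rw [this, hMc]
    rfl
  · intro hdet
    by_contra hno
    push_neg at hno
    have hinj : Function.Injective M.mulVecLin := by
      rw [← LinearMap.ker_eq_bot, LinearMap.ker_eq_bot']
      intro c hc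
      by_contra h0
      exact (hno c h0) hc
    have hcard : Module.finrank K (LinearMap.range M.mulVecLin) = Fintype.card κ := by
      rw [LinearMap.finrank_range_of_inj hinj, Module.finrank_pi]
    have hrank : M.rank = Fintype.card κ := hcard
    have hspan : Submodule.span K (Set.range M) = ⊤ := by
      apply Submodule.eq_top_of_finrank_eq
      rw [Module.finrank_pi, ← hrank]
      exact (Matrix.rank_eq_finrank_span_row M).symm
    obtain ⟨b, hbsub, hbspan, hbli⟩ := exists_linearIndependent K (Set.range M)
    rw [hspan] at hbspan
    have hfin : b.Finite := (Set.finite_range M).subset hbsub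
    haveI := hfin.fintype
    let B : Module.Basis b K (κ → K) := Module.Basis.mk hbli (by rw [Subtype.range_coe, hbspan])
    have hcardb : Fintype.card b = Fintype.card κ := by
      rw [← Module.finrank_eq_card_basis B, Module.finrank_pi]
    let e : κ ≃ b := (Fintype.equivOfCardEq hcardb).symm
    have hchoice : ∀ y : b, ∃ x : ι, M x = (y : κ → K) := fun y => hbsub y.2
    choose pre hpre using hchoice
    let r : κ → ι := fun j => pre (e j)
    have hrows : ∀ j, (M.submatrix r id) j = (e j : κ → K) := by
      intro j; ext y; rw [Matrix.submatrix_apply, id]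
      exact congrFun (hpre (e j)) y
    have hli : LinearIndependent K fun j => (M.submatrix r id) j := by
      have : LinearIndependent K fun j : κ => ((e j : κ → K)) := hbli.comp e e.injective
      simpa only [funext hrows] using this
    have hd := hdet r
    rw [← Matrix.exists_vecMul_eq_zero_iff] at hd
    obtain ⟨v, hv, hvM⟩ := hd
    apply hv
    have hsum : ∑ x, v x • (M.submatrix r id) x = 0 := by
      ext y
      have : (∑ x, v x • (M.submatrix r id) x) y = (v ᵥ* (M.submatrix r id)) y := by
        simp [Matrix.vecMul, dotProduct, Finset.sum_apply, mul_comm]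
      rw [this, hvM]
    have := linearIndependent_iff'.mp hli Finset.univ v hsum
    exact funext fun j => this j (Finset.mem_univ j)

end AuxLinearAlgebra

section AuxDehom

lemma aux_degree_sum {N : ℕ} (α : Fin N →₀ ℕ) : α.degree = ∑ i, α i :=
  Finset.sum_subset (Finset.subset_univ _)
    (fun _ _ hx => Finsupp.notMem_support_iff.mp hx)

lemma aux_aeval_cons_monomial {N : ℕ} (α : Fin (N + 1) →₀ ℕ) (c : k) :
    aeval (Fin.cons 1 X : Fin (N + 1) → MvPolynomial (Fin N) k) (monomial α c)
      = monomial (Finsupp.tail α) c := by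
  rw [aeval_monomial, monomial_eq]
  congr 1
  rw [Finsupp.prod_fintype _ _ (fun i => pow_zero _),
    Finsupp.prod_fintype _ _ (fun i => pow_zero _), Fin.prod_univ_succ]
  simp [Finsupp.tail_apply]

lemma aux_tail_inj_of_deg {N m : ℕ} {α β : Fin (N + 1) →₀ ℕ}
    (hα : α.degree = m) (hβ : β.degree = m) (h : Finsupp.tail α = Finsupp.tail β) :
    α = β := by
  have hsum : α 0 + ∑ j : Fin N, α j.succ = β 0 + ∑ j : Fin N, β j.succ := by
    rw [← Fin.sum_univ_succ (fun i => α i), ← Fin.sum_univ_succ (fun i => β i),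
      ← aux_degree_sum, ← aux_degree_sum, hα, hβ]
  have htail : ∀ j : Fin N, α j.succ = β j.succ := by
    intro j
    have := DFunLike.congr_fun h j
    simpa [Finsupp.tail_apply] using this
  have h0 : α 0 = β 0 := by
    have : (∑ j : Fin N, α j.succ) = ∑ j : Fin N, β j.succ :=
      Finset.sum_congr rfl (fun j _ => htail j)
    omega
  ext i
  refine Fin.cases h0 htail i

lemma aux_homog_aeval_eq_zero {N m : ℕ} {g : MvPolynomial (Fin (N + 1)) k}
    (hg : g.IsHomogeneous m)
    (h0 : aeval (Fin.cons 1 X : Fin (N + 1) → MvPolynomial (Fin N) k) g = 0) :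
    g = 0 := by
  ext β
  rw [coeff_zero]
  by_cases hβ : β ∈ g.support
  · have hβd : β.degree = m := by
      by_contra hne
      exact (mem_support_iff.mp hβ) (hg.coeff_eq_zero hne)
    have hrepr : aeval (Fin.cons 1 X : Fin (N + 1) → MvPolynomial (Fin N) k) g
        = ∑ α ∈ g.support, monomial (Finsupp.tail α) (coeff α g) := by
      conv_lhs => rw [← support_sum_monomial_coeff g]
      rw [map_sum]
      exact Finset.sum_congr rfl fun α _ => aux_aeval_cons_monomial k α _
    have hc : coeff (Finsupp.tail β) (∑ α ∈ g.support, monomial (Finsupp.tail α) (coeff α g))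
        = coeff β g := by
      rw [coeff_sum]
      rw [Finset.sum_eq_single β]
      · simp [coeff_monomial]
      · intro α hαs hαβ
        rw [coeff_monomial, if_neg]
        intro he
        have hαd : α.degree = m := by
          by_contra hne
          exact (mem_support_iff.mp hαs) (hg.coeff_eq_zero hne)
        exact hαβ (aux_tail_inj_of_deg hαd hβd he)
      · intro h; exact absurd hβ h
    rw [← hc, hrepr.symm, h0, coeff_zero]
  · exact notMem_support_iff.mp hβ

lemma aux_dehom_apply {n : ℕ} (g : MvPolynomial (Fin (n + 1)) k) :
    dehom k n g = algebraMap (MvPolynomial (Fin n) k) (RatFunField k n)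
      (aeval (Fin.cons 1 X : Fin (n + 1) → MvPolynomial (Fin n) k) g) := by
  have : dehom k n = ((IsScalarTower.toAlgHom k (MvPolynomial (Fin n) k)
      (RatFunField k n)).comp (aeval (Fin.cons 1 X))) := by
    apply MvPolynomial.algHom_ext
    intro i
    refine Fin.cases ?_ (fun j => ?_) i
    · simp [dehom]
    · simp [dehom, zCoord]
  rw [this]; rfl

lemma aux_dehom_eq_zero {n m : ℕ} {g : MvPolynomial (Fin (n + 1)) k}
    (hg : g.IsHomogeneous m) (h : dehom k n g = 0) : g = 0 := by
  rw [aux_dehom_apply] at h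
  have := (map_eq_zero_iff _ (IsFractionRing.injective (MvPolynomial (Fin n) k)
    (RatFunField k n))).mp h
  exact aux_homog_aeval_eq_zero k hg this

lemma aux_dehom_inj {n m : ℕ} {g h : MvPolynomial (Fin (n + 1)) k}
    (hg : g.IsHomogeneous m) (hh : h.IsHomogeneous m) (he : dehom k n g = dehom k n h) :
    g = h := by
  have : g - h = 0 := by
    apply aux_dehom_eq_zero k (hg.sub hh)
    rw [map_sub, he, sub_self]
  exact sub_eq_zero.mp this

lemma aux_dehom_ne_zero {n m : ℕ} {g : MvPolynomial (Fin (n + 1)) k}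
    (hg : g.IsHomogeneous m) (h : g ≠ 0) : dehom k n g ≠ 0 :=
  fun h0 => h (aux_dehom_eq_zero k hg h0)

end AuxDehom

section AuxRepresents

lemma aux_dehom_X0 (n : ℕ) : dehom k n (X 0) = 1 := by
  rw [dehom, aeval_X, Fin.cons_zero]

lemma aux_reps_succ {n : ℕ} {f : Cremona k n} {d : ℕ}
    {g : Fin (n + 1) → MvPolynomial (Fin (n + 1)) k} (h : Represents k n f d g) :
    Represents k n f (d + 1) (fun i => X 0 * g i) := by
  obtain ⟨h1, h2, h3⟩ := h
  refine ⟨fun i => ?_, mul_ne_zero (X_ne_zero 0) h2, fun j => ?_⟩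
  · have := (h1 i).mul (isHomogeneous_X k (0 : Fin (n + 1)))
    rwa [mul_comm] at this
  · simp only [map_mul, aux_dehom_X0, one_mul]
    exact h3 j

lemma aux_reps_mono {n : ℕ} {f : Cremona k n} {d e : ℕ} (hde : d ≤ e)
    (h : ∃ g, Represents k n f d g) : ∃ g, Represents k n f e g := by
  induction e, hde using Nat.le_induction with
  | base => exact h
  | succ e _ ih =>
    obtain ⟨g, hg⟩ := ih
    exact ⟨_, aux_reps_succ k hg⟩

lemma aux_homog_zero_eq_C {N : ℕ} {g : MvPolynomial (Fin N) k}
    (hg : g.IsHomogeneous 0) : g = C (coeff 0 g) := by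
  ext β
  rw [coeff_C]
  by_cases hβ : (0 : Fin N →₀ ℕ) = β
  · rw [if_pos hβ, ← hβ]
  · rw [if_neg hβ]
    apply hg.coeff_eq_zero
    intro hd
    exact hβ ((Finsupp.degree_eq_zero_iff β).mp hd).symm

lemma aux_reps_ge_one {n : ℕ} (hn : 1 ≤ n) {f : Cremona k n} {d : ℕ}
    {g : Fin (n + 1) → MvPolynomial (Fin (n + 1)) k} (h : Represents k n f d g) :
    1 ≤ d := by
  by_contra hd
  push_neg at hd
  interval_cases d
  obtain ⟨h1, h2, h3⟩ := h
  set j0 : Fin n := ⟨0, hn⟩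
  have hC : ∀ i, g i = C (coeff 0 (g i)) := fun i => aux_homog_zero_eq_C k (h1 i)
  have hdC : ∀ i, dehom k n (g i) = algebraMap k (RatFunField k n) (coeff 0 (g i)) := by
    intro i
    conv_lhs => rw [hC i]
    rw [dehom]
    simp
  have hc0 : coeff 0 (g 0) ≠ 0 := by
    intro hh
    apply h2
    rw [hC 0, hh, map_zero]
  have hzj : f (zCoord k n j0) = algebraMap k (RatFunField k n)
      (coeff 0 (g j0.succ) / coeff 0 (g 0)) := by
    have hthis := h3 j0
    rw [hdC 0, hdC j0.succ] at hthis
    have hem : algebraMap k (RatFunField k n) (coeff 0 (g 0)) ≠ 0 := by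
      simpa using hc0
    rw [map_div₀, eq_div_iff hem]
    exact hthis
  have hz : zCoord k n j0 = algebraMap k (RatFunField k n)
      (coeff 0 (g j0.succ) / coeff 0 (g 0)) := by
    have := congrArg f.symm hzj
    rwa [AlgEquiv.symm_apply_apply, AlgEquiv.commutes] at this
  set e := coeff 0 (g j0.succ) / coeff 0 (g 0)
  have : algebraMap (MvPolynomial (Fin n) k) (RatFunField k n) (X j0)
      = algebraMap (MvPolynomial (Fin n) k) (RatFunField k n) (C e) := by
    have h1' : algebraMap (MvPolynomial (Fin n) k) (RatFunField k n) (X j0)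
        = zCoord k n j0 := rfl
    have h2' : algebraMap k (RatFunField k n) e
        = algebraMap (MvPolynomial (Fin n) k) (RatFunField k n) (C e) := by
      rw [IsScalarTower.algebraMap_apply k (MvPolynomial (Fin n) k) (RatFunField k n),
        MvPolynomial.algebraMap_eq]
    rw [h1', hz, h2']
  have hXC : (X j0 : MvPolynomial (Fin n) k) = C e :=
    IsFractionRing.injective (MvPolynomial (Fin n) k) (RatFunField k n) this
  have := congrArg constantCoeff hXC
  rw [constantCoeff_X, constantCoeff_C] at this
  rw [← this, map_zero] at hXC
  exact X_ne_zero j0 hXC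

end AuxRepresents

section AuxMatrix

/-- Index type for exponent vectors of total degree `d` on `Fin N`. -/
abbrev ExpIdx (N d : ℕ) : Type := {v : Fin N → Fin (d + 1) // ∑ i, (v i : ℕ) = d}

/-- The finitely supported function corresponding to an exponent index. -/
noncomputable def expOf {N d : ℕ} (v : ExpIdx N d) : Fin N →₀ ℕ :=
  Finsupp.equivFunOnFinite.symm (fun i => (v.1 i : ℕ))

lemma expOf_apply {N d : ℕ} (v : ExpIdx N d) (i : Fin N) : expOf v i = v.1 i := rfl

lemma expOf_degree {N d : ℕ} (v : ExpIdx N d) : (expOf v).degree = d := by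
  rw [aux_degree_sum]
  exact v.2

lemma expOf_inj {N d : ℕ} : Function.Injective (expOf (N := N) (d := d)) := by
  intro v w h
  apply Subtype.ext
  funext i
  have := DFunLike.congr_fun h i
  rw [expOf_apply, expOf_apply] at this
  exact Fin.val_injective this

lemma exists_expOf {N d : ℕ} {α : Fin N →₀ ℕ} (hα : α.degree = d) :
    ∃ v : ExpIdx N d, expOf v = α := by
  have hle : ∀ i, α i ≤ d := fun i => hα ▸ Finsupp.le_degree i α
  refine ⟨⟨fun i => ⟨α i, Nat.lt_succ_of_le (hle i)⟩, ?_⟩, ?_⟩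
  · show (∑ i, α i) = d
    rw [← aux_degree_sum α]
    exact hα
  · ext i
    rfl

lemma aux_homog_repr {N d : ℕ} {p : MvPolynomial (Fin N) k} (hp : p.IsHomogeneous d) :
    p = ∑ v : ExpIdx N d, monomial (expOf v) (coeff (expOf v) p) := by
  classical
  have hsub : p.support ⊆ Finset.image (expOf (N := N) (d := d)) Finset.univ := by
    intro α hα
    have hαd : α.degree = d := by
      by_contra hne
      exact (mem_support_iff.mp hα) (hp.coeff_eq_zero hne)
    obtain ⟨v, hv⟩ := exists_expOf hαd
    exact Finset.mem_image.mpr ⟨v, Finset.mem_univ v, hv⟩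
  calc p = ∑ α ∈ p.support, monomial α (coeff α p) := (support_sum_monomial_coeff p).symm
    _ = ∑ α ∈ Finset.image (expOf (N := N) (d := d)) Finset.univ, monomial α (coeff α p) :=
        Finset.sum_subset hsub (fun α _ hα => by rw [notMem_support_iff.mp hα, map_zero])
    _ = ∑ v : ExpIdx N d, monomial (expOf v) (coeff (expOf v) p) :=
        Finset.sum_image (fun v _ w _ h => expOf_inj h)

lemma aux_coeff_sum_monomial {N d : ℕ} (c : ExpIdx N d → k) (v₀ : ExpIdx N d) :
    coeff (expOf v₀) (∑ v : ExpIdx N d, monomial (expOf v) (c v)) = c v₀ := by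
  rw [coeff_sum]
  rw [Finset.sum_eq_single v₀]
  · simp [coeff_monomial]
  · intro v _ hv
    rw [coeff_monomial, if_neg (fun he => hv (expOf_inj he))]
  · intro h; exact absurd (Finset.mem_univ v₀) h

lemma aux_sum_monomial_ne_zero {N d : ℕ} {c : ExpIdx N d → k} {v₀ : ExpIdx N d}
    (hv₀ : c v₀ ≠ 0) : (∑ v : ExpIdx N d, monomial (expOf v) (c v)) ≠ 0 := by
  intro h
  apply hv₀
  rw [← aux_coeff_sum_monomial k c v₀, h, coeff_zero]

/-- The matrix of the linear system expressing that `(g_0,…,g_n)` of degree `d`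
satisfies `F_{j+1}·g_0 - F_0·g_{j+1} = 0`. -/
noncomputable def famMatrix {A : Type*} [CommRing A] (n ℓ d : ℕ)
    (F : Fin (n + 1) → MvPolynomial (Fin (n + 1)) A) :
    Matrix (Fin n × ExpIdx (n + 1) (ℓ + d)) (Fin (n + 1) × ExpIdx (n + 1) d) A :=
  fun r p => coeff (expOf r.2)
    ((if p.1 = 0 then F r.1.succ else 0) * monomial (expOf p.2) 1
      - (if p.1 = r.1.succ then F 0 else 0) * monomial (expOf p.2) 1)

lemma aux_sum_ite {α β : Type*} [Fintype α] [Fintype β] [DecidableEq α] {M : Type*}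
    [AddCommMonoid M] (i0 : α) (f : α → β → M) :
    ∑ p : α × β, (if p.1 = i0 then f p.1 p.2 else 0) = ∑ v, f i0 v := by
  rw [Fintype.sum_prod_type]
  have h : ∀ i : α, (∑ v, if i = i0 then f i v else 0) = if i = i0 then ∑ v, f i v else 0 := by
    intro i; split <;> simp
  simp_rw [h]
  rw [Finset.sum_ite_eq' Finset.univ i0 (fun i => ∑ v, f i v)]
  simp

lemma aux_mulVec_coeff {A : Type*} [CommRing A] (n ℓ d : ℕ)
    (F : Fin (n + 1) → MvPolynomial (Fin (n + 1)) A) (t : A →+* k)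
    (c : (Fin (n + 1) × ExpIdx (n + 1) d) → k) (j : Fin n) (w : ExpIdx (n + 1) (ℓ + d)) :
    ((famMatrix n ℓ d F).map t).mulVec c (j, w)
      = coeff (expOf w)
          ((MvPolynomial.map t (F j.succ)) * (∑ v, monomial (expOf v) (c (0, v)))
            - (MvPolynomial.map t (F 0)) * (∑ v, monomial (expOf v) (c (j.succ, v)))) := by
  have key : ∀ (q : MvPolynomial (Fin (n + 1)) k) (cc : ExpIdx (n + 1) d → k),
      coeff (expOf w) (q * ∑ v, monomial (expOf v) (cc v))
        = ∑ v, coeff (expOf w) (q * monomial (expOf v) 1) * cc v := by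
    intro q cc
    rw [Finset.mul_sum, coeff_sum]
    refine Finset.sum_congr rfl fun v _ => ?_
    have : monomial (expOf v) (cc v) = C (cc v) * monomial (expOf v) 1 := by
      rw [C_mul_monomial, mul_one]
    rw [this, ← mul_assoc, mul_comm q (C (cc v)), mul_assoc, coeff_C_mul, mul_comm]
  rw [coeff_sub, key, key]
  have hmv : ((famMatrix n ℓ d F).map t).mulVec c (j, w)
      = ∑ p : Fin (n + 1) × ExpIdx (n + 1) d,
          ((if p.1 = 0 then coeff (expOf w) ((MvPolynomial.map t (F j.succ))
              * monomial (expOf p.2) 1) else 0)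
            - (if p.1 = j.succ then coeff (expOf w) ((MvPolynomial.map t (F 0))
              * monomial (expOf p.2) 1) else 0)) * c p := by
    rw [Matrix.mulVec, dotProduct]
    refine Finset.sum_congr rfl fun p _ => ?_
    congr 1
    simp only [Matrix.map_apply, famMatrix, ← coeff_map]
    by_cases h1 : p.1 = 0 <;> by_cases h2 : p.1 = j.succ <;>
      simp [h1, h2, map_sub, map_mul, map_monomial, coeff_sub, Fin.succ_ne_zero j,
        (Fin.succ_ne_zero j).symm]
  rw [hmv]
  simp_rw [sub_mul, ite_mul, zero_mul]
  rw [Finset.sum_sub_distrib]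
  rw [aux_sum_ite (0 : Fin (n + 1))
      (fun i v => coeff (expOf w) ((MvPolynomial.map t (F j.succ)) * monomial (expOf v) 1)
        * c (i, v)),
    aux_sum_ite (j.succ : Fin (n + 1))
      (fun i v => coeff (expOf w) ((MvPolynomial.map t (F 0)) * monomial (expOf v) 1)
        * c (i, v))]

end AuxMatrix


section AuxKey

lemma aux_key {n : ℕ} (S : AffSource k) (t : S.Pts) (f : Cremona k n) {ℓ : ℕ} (d : ℕ)
    (F : Fin (n + 1) → MvPolynomial (Fin (n + 1)) S.A)
    (hFhom : ∀ i, (F i).IsHomogeneous ℓ)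
    (hF0 : MvPolynomial.map (t : S.A →+* k) (F 0) ≠ 0)
    (hrel : ∀ j : Fin n, f (zCoord k n j) * dehom k n (MvPolynomial.map (t : S.A →+* k) (F 0))
      = dehom k n (MvPolynomial.map (t : S.A →+* k) (F j.succ))) :
    (∃ g, Represents k n f d g) ↔
      ∃ c, c ≠ 0 ∧ ((famMatrix n ℓ d F).map (t : S.A →+* k)).mulVec c = 0 := by
  have hFt : ∀ i, (MvPolynomial.map (t : S.A →+* k) (F i)).IsHomogeneous ℓ :=
    fun i => (hFhom i).map _
  constructor
  · rintro ⟨g, hghom, hg0, hgrel⟩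
    refine ⟨fun p => coeff (expOf p.2) (g p.1), ?_, ?_⟩
    · obtain ⟨β, hβ⟩ := MvPolynomial.ne_zero_iff.mp hg0
      have hβd : β.degree = d := by
        by_contra hne
        exact hβ ((hghom 0).coeff_eq_zero hne)
      obtain ⟨v, hv⟩ := exists_expOf hβd
      intro hczero
      apply hβ
      have := congrFun hczero ((0 : Fin (n + 1)), v)
      simpa [hv] using this
    · have hkey : ∀ j : Fin n, MvPolynomial.map (t : S.A →+* k) (F j.succ) * g 0
          = MvPolynomial.map (t : S.A →+* k) (F 0) * g j.succ := by
        intro j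
        apply aux_dehom_inj k (m := ℓ + d) ((hFt j.succ).mul (hghom 0))
          ((hFt 0).mul (hghom j.succ))
        rw [map_mul, map_mul, ← hrel j, ← hgrel j]
        ring
      funext p
      obtain ⟨j, w⟩ := p
      rw [aux_mulVec_coeff]
      show coeff (expOf w) _ = 0
      rw [show (∑ v : ExpIdx (n + 1) d, monomial (expOf v)
            (coeff (expOf ((0 : Fin (n + 1)), v).2) (g ((0 : Fin (n + 1)), v).1)))
          = g 0 from (aux_homog_repr k (hghom 0)).symm,
        show (∑ v : ExpIdx (n + 1) d, monomial (expOf v)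
            (coeff (expOf (j.succ, v).2) (g (j.succ, v).1)))
          = g j.succ from (aux_homog_repr k (hghom j.succ)).symm,
        hkey j, sub_self, coeff_zero]
  · rintro ⟨c, hc, hmv⟩
    have hgeq : ∀ i : Fin (n + 1),
        (∑ v : ExpIdx (n + 1) d, monomial (expOf v) (c (i, v)))
          = ∑ v : ExpIdx (n + 1) d, monomial (expOf v) (c (i, v)) := fun _ => rfl
    set g : Fin (n + 1) → MvPolynomial (Fin (n + 1)) k :=
      fun i => ∑ v : ExpIdx (n + 1) d, monomial (expOf v) (c (i, v)) with hgdef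
    have hghom : ∀ i, (g i).IsHomogeneous d := fun i =>
      MvPolynomial.IsHomogeneous.sum _ _ _ (fun v _ => isHomogeneous_monomial _ (expOf_degree v))
    have hF0g : ∀ j : Fin n, MvPolynomial.map (t : S.A →+* k) (F j.succ) * g 0
        = MvPolynomial.map (t : S.A →+* k) (F 0) * g j.succ := by
      intro j
      have hhom : (MvPolynomial.map (t : S.A →+* k) (F j.succ) * g 0
          - MvPolynomial.map (t : S.A →+* k) (F 0) * g j.succ).IsHomogeneous (ℓ + d) :=
        ((hFt j.succ).mul (hghom 0)).sub ((hFt 0).mul (hghom j.succ))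
      have hD : MvPolynomial.map (t : S.A →+* k) (F j.succ) * g 0
          - MvPolynomial.map (t : S.A →+* k) (F 0) * g j.succ = 0 := by
        apply MvPolynomial.ext
        intro β
        rw [coeff_zero]
        by_cases hβ : β.degree = ℓ + d
        · obtain ⟨w, hw⟩ := exists_expOf hβ
          have hthis := congrFun hmv (j, w)
          rw [aux_mulVec_coeff] at hthis
          rw [← hw]
          simpa [hgdef] using hthis
        · exact hhom.coeff_eq_zero hβ
      exact sub_eq_zero.mp hD
    have hg0 : g 0 ≠ 0 := by
      intro h0
      apply hc
      have hgz : ∀ i, g i = 0 := by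
        intro i
        refine Fin.cases h0 (fun j => ?_) i
        have hth := hF0g j
        rw [h0, mul_zero] at hth
        rcases mul_eq_zero.mp hth.symm with h | h
        · exact absurd h hF0
        · exact h
      funext p
      obtain ⟨i, v⟩ := p
      have hcoeff : coeff (expOf v) (g i) = c (i, v) :=
        aux_coeff_sum_monomial k (fun v => c (i, v)) v
      rw [hgz i, coeff_zero] at hcoeff
      exact hcoeff.symm
    refine ⟨g, hghom, hg0, fun j => ?_⟩
    have hd0 : dehom k n (MvPolynomial.map (t : S.A →+* k) (F 0)) ≠ 0 :=
      aux_dehom_ne_zero k (hFt 0) hF0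
    apply mul_left_cancel₀ hd0
    calc dehom k n (MvPolynomial.map (t : S.A →+* k) (F 0))
          * (f (zCoord k n j) * dehom k n (g 0))
        = (f (zCoord k n j) * dehom k n (MvPolynomial.map (t : S.A →+* k) (F 0)))
          * dehom k n (g 0) := by ring
      _ = dehom k n (MvPolynomial.map (t : S.A →+* k) (F j.succ)) * dehom k n (g 0) := by
          rw [hrel j]
      _ = dehom k n (MvPolynomial.map (t : S.A →+* k) (F j.succ) * g 0) :=
          (map_mul _ _ _).symm
      _ = dehom k n (MvPolynomial.map (t : S.A →+* k) (F 0) * g j.succ) := by rw [hF0g j]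
      _ = dehom k n (MvPolynomial.map (t : S.A →+* k) (F 0)) * dehom k n (g j.succ) :=
          map_mul _ _ _

lemma aux_closed_vanish (S : AffSource k) (b : S.A) : IsClosed {t : S.Pts | t b = 0} := by
  have heq : {t : S.Pts | t b = 0}
      = (fun t : S.Pts => (⟨RingHom.ker (t : S.A →+* k), RingHom.ker_isPrime _⟩ :
          PrimeSpectrum S.A)) ⁻¹' (PrimeSpectrum.zeroLocus {b}) := by
    ext t
    simp [PrimeSpectrum.mem_zeroLocus, Set.singleton_subset_iff, RingHom.mem_ker]
  rw [heq]
  exact (PrimeSpectrum.isClosed_zeroLocus _).preimage continuous_induced_dom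

lemma aux_chart {n : ℕ} (hn : 1 ≤ n) (S : AffSource k) (φ : S.Pts → Cremona k n)
    (a : S.A) (ℓ : ℕ) (F : Fin (n + 1) → MvPolynomial (Fin (n + 1)) S.A)
    (hF : IsFamilyOn k n S φ a ℓ F) :
    ∃ Z : ℕ → Set S.Pts, (∀ d, IsClosed (Z d)) ∧
      ∀ t : S.Pts, t a ≠ 0 →
        1 ≤ cdeg k n (φ t) ∧ cdeg k n (φ t) ≤ ℓ ∧
          ∀ d, (t ∈ Z d ↔ cdeg k n (φ t) ≤ d) := by
  classical
  refine ⟨fun d => if d = 0 then ∅ else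
      {t : S.Pts | ∀ r : (Fin (n + 1) × ExpIdx (n + 1) d) → (Fin n × ExpIdx (n + 1) (ℓ + d)),
        t (((famMatrix n ℓ d F).submatrix r id).det) = 0},
    fun d => ?_, fun t ht => ?_⟩
  · dsimp only
    split
    · exact isClosed_empty
    · rw [Set.setOf_forall]
      exact isClosed_iInter fun r => aux_closed_vanish k S _
  · obtain ⟨hFhom, hFam⟩ := hF
    obtain ⟨⟨i0, hi0⟩, hrel⟩ := hFam t ht
    have hFthom : ∀ i, (MvPolynomial.map (t : S.A →+* k) (F i)).IsHomogeneous ℓ :=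
      fun i => (hFhom i).map _
    have hF0 : MvPolynomial.map (t : S.A →+* k) (F 0) ≠ 0 := by
      intro h0
      apply hi0
      refine Fin.cases h0 (fun j => ?_) i0
      apply aux_dehom_eq_zero k (hFthom j.succ)
      rw [← hrel j, h0, map_zero, mul_zero]
    have hrepsℓ : Represents k n (φ t) ℓ
        (fun i => MvPolynomial.map (t : S.A →+* k) (F i)) := ⟨fun i => hFthom i, hF0, hrel⟩
    have hℓ1 : 1 ≤ ℓ := aux_reps_ge_one k hn hrepsℓ
    have hmem : ℓ ∈ {d | 1 ≤ d ∧ ∃ g, Represents k n (φ t) d g} := ⟨hℓ1, _, hrepsℓ⟩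
    have hne : {d | 1 ≤ d ∧ ∃ g, Represents k n (φ t) d g}.Nonempty := ⟨ℓ, hmem⟩
    have hinf := Nat.sInf_mem hne
    refine ⟨hinf.1, Nat.sInf_le hmem, fun d => ?_⟩
    have hdeteq : ∀ r : (Fin (n + 1) × ExpIdx (n + 1) d) → (Fin n × ExpIdx (n + 1) (ℓ + d)),
        t (((famMatrix n ℓ d F).submatrix r id).det)
          = ((((famMatrix n ℓ d F).map (t : S.A →+* k)).submatrix r id)).det := by
      intro r
      rw [Matrix.submatrix_map, ← RingHom.mapMatrix_apply, ← RingHom.map_det]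
      rfl
    dsimp only
    rcases Nat.eq_zero_or_pos d with rfl | hd
    · simp only [if_pos rfl]
      constructor
      · intro h
        exact absurd h (Set.notMem_empty t)
      · intro h
        exact absurd (hinf.1.trans h) (by norm_num)
    · rw [if_neg hd.ne']
      constructor
      · intro htZ
        have hdets : ∀ r, ((((famMatrix n ℓ d F).map (t : S.A →+* k)).submatrix r id)).det = 0 :=
          fun r => (hdeteq r).symm.trans (htZ r)
        obtain ⟨c, hc, hmv⟩ := (aux_minors _).mpr hdets
        have hrep := (aux_key k S t (φ t) d F hFhom hF0 hrel).mpr ⟨c, hc, hmv⟩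
        exact Nat.sInf_le ⟨hd, hrep⟩
      · intro hcd
        have hrepd : ∃ g, Represents k n (φ t) d g := aux_reps_mono k hcd hinf.2
        obtain ⟨c, hc, hmv⟩ := (aux_key k S t (φ t) d F hFhom hF0 hrel).mp hrepd
        intro r
        rw [hdeteq r]
        exact (aux_minors _).mp ⟨c, hc, hmv⟩ r

end AuxKey

/-- For every morphism `φ : T → Bir(ℙⁿ)` from a `k`-variety there is a finite
stratification of `T` by pairwise disjoint locally closed subsets on each of which
`t ↦ deg(φ_t)` is constant. -/
theorem exists_stratification_deg_constant (k : Type) [Field k] [IsAlgClosed k]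
    (n : ℕ) (hn : 1 ≤ n) (S : AffSource k) (φ : S.Pts → Cremona k n)
    (hφ : IsMorphism k n S φ) :
    ∃ (ℓ : ℕ) (V : Fin ℓ → Set S.Pts),
      (∀ j, IsLocallyClosed (V j)) ∧
      (∀ i j, i ≠ j → Disjoint (V i) (V j)) ∧
      (⋃ j, V j) = Set.univ ∧
      ∀ j, ∃ d : ℕ, ∀ t ∈ V j, cdeg k n (φ t) = d := by
  classical
  haveI : IsNoetherianRing S.A := Algebra.FiniteType.isNoetherianRing k S.A
  set G : Set S.A := {b | ∃ ℓ F, IsFamilyOn k n S φ b ℓ F} with hG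
  obtain ⟨T, hT⟩ := IsNoetherian.noetherian (Ideal.span G)
  have hTspan : ∀ x : S.A, x ∈ T → ∃ sx : Finset S.A, ↑sx ⊆ G ∧ x ∈ Ideal.span (sx : Set S.A) := by
    intro x hx
    have hxG : x ∈ Ideal.span G := by
      rw [← hT]
      exact Ideal.subset_span hx
    exact Submodule.mem_span_finite_of_mem_span hxG
  choose! sel hsel1 hsel2 using hTspan
  set sfin : Finset S.A := T.biUnion sel with hsfin
  have hsub : (sfin : Set S.A) ⊆ G := by
    intro b hb
    simp only [hsfin, Finset.coe_biUnion, Set.mem_iUnion, Finset.mem_coe] at hb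
    obtain ⟨x, hx, hbx⟩ := hb
    exact hsel1 x hx hbx
  have hcov : ∀ t : S.Pts, ∃ b ∈ sfin, t b ≠ 0 := by
    intro t
    obtain ⟨a, ha, hℓ, hFa, hfam⟩ := hφ t
    by_contra hno
    push_neg at hno
    have hker : Ideal.span (sfin : Set S.A) ≤ RingHom.ker (t : S.A →+* k) := by
      rw [Ideal.span_le]
      intro b hb
      exact RingHom.mem_ker.mpr (hno b hb)
    have haspan : a ∈ Ideal.span (sfin : Set S.A) := by
      have h1 : a ∈ Ideal.span G := Ideal.subset_span ⟨hℓ, hFa, hfam⟩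
      rw [← hT] at h1
      have h2 : Ideal.span (T : Set S.A) ≤ Ideal.span (sfin : Set S.A) := by
        rw [Ideal.span_le]
        intro x hx
        have := hsel2 x hx
        exact Ideal.span_mono (by
          intro y hy
          simp only [hsfin, Finset.coe_biUnion, Set.mem_iUnion, Finset.mem_coe]
          exact ⟨x, hx, hy⟩) this
      exact h2 h1
    exact ha (RingHom.mem_ker.mp (hker haspan))
  set m : ℕ := sfin.card with hm
  set e : Fin m → S.A := fun i => (sfin.equivFin.symm i : S.A) with he
  have heG : ∀ i, e i ∈ G := fun i => hsub (sfin.equivFin.symm i).2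
  have hcov' : ∀ t : S.Pts, ∃ i : Fin m, t (e i) ≠ 0 := by
    intro t
    obtain ⟨b, hb, hbt⟩ := hcov t
    refine ⟨sfin.equivFin ⟨b, hb⟩, ?_⟩
    simpa [he, Equiv.symm_apply_apply] using hbt
  have hch : ∀ i : Fin m, ∃ (ℓi : ℕ) (Z : ℕ → Set S.Pts), (∀ d, IsClosed (Z d)) ∧
      ∀ t : S.Pts, t (e i) ≠ 0 →
        1 ≤ cdeg k n (φ t) ∧ cdeg k n (φ t) ≤ ℓi ∧
          ∀ d, (t ∈ Z d ↔ cdeg k n (φ t) ≤ d) := by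
    intro i
    obtain ⟨ℓi, Fi, hFi⟩ := heG i
    obtain ⟨Z, h1, h2⟩ := aux_chart k hn S φ (e i) ℓi Fi hFi
    exact ⟨ℓi, Z, h1, h2⟩
  choose ℓs Z hZc hZ using hch
  set L : ℕ := Finset.univ.sup ℓs with hL
  set V2 : Fin m × Fin (L + 1) → Set S.Pts := fun p =>
    {t : S.Pts | t (e p.1) ≠ 0} ∩ (⋂ j : Fin m, ⋂ (_ : j < p.1), {t : S.Pts | t (e j) = 0})
      ∩ Z p.1 (p.2 : ℕ) ∩ (Z p.1 ((p.2 : ℕ) - 1))ᶜ with hV2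
  have hV2const : ∀ p, ∀ t ∈ V2 p, cdeg k n (φ t) = (p.2 : ℕ) := by
    rintro ⟨i, d⟩ t ⟨⟨⟨ht1, _⟩, ht3⟩, ht4⟩
    dsimp only at ht1 ht3 ht4 ⊢
    obtain ⟨hc1, hc2, hc3⟩ := hZ i t ht1
    have hle : cdeg k n (φ t) ≤ (d : ℕ) := (hc3 _).mp ht3
    have hgt : ¬ cdeg k n (φ t) ≤ (d : ℕ) - 1 := fun hcon => ht4 ((hc3 _).mpr hcon)
    omega
  have hV2lc : ∀ p, IsLocallyClosed (V2 p) := by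
    rintro ⟨i, d⟩
    have h1 : IsOpen {t : S.Pts | t (e i) ≠ 0} := by
      rw [show {t : S.Pts | t (e i) ≠ 0} = {t : S.Pts | t (e i) = 0}ᶜ from rfl,
        isOpen_compl_iff]
      exact aux_closed_vanish k S _
    have h2 : IsClosed (⋂ j : Fin m, ⋂ (_ : j < i), {t : S.Pts | t (e j) = 0}) :=
      isClosed_iInter fun j => isClosed_iInter fun _ => aux_closed_vanish k S _
    have h3 : IsClosed (Z i (d : ℕ)) := hZc i _
    have h4 : IsOpen (Z i ((d : ℕ) - 1))ᶜ := (hZc i _).isOpen_compl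
    exact ((h1.isLocallyClosed.inter h2.isLocallyClosed).inter h3.isLocallyClosed).inter
      h4.isLocallyClosed
  have hV2disj : ∀ p q, p ≠ q → Disjoint (V2 p) (V2 q) := by
    rintro ⟨i, d⟩ ⟨i', d'⟩ hpq
    rw [Set.disjoint_left]
    rintro t htp htq
    rcases lt_trichotomy i i' with hii | hii | hii
    · obtain ⟨⟨⟨_, ht2⟩, _⟩, _⟩ := htq
      obtain ⟨⟨⟨ht1, _⟩, _⟩, _⟩ := htp
      have := Set.mem_iInter.mp ht2 i
      have := Set.mem_iInter.mp this hii
      exact ht1 this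
    · subst hii
      have hd : d = d' := by
        have e1 := hV2const ⟨i, d⟩ t htp
        have e2 := hV2const ⟨i, d'⟩ t htq
        dsimp only at e1 e2
        exact Fin.ext (by omega)
      exact hpq (by rw [hd])
    · obtain ⟨⟨⟨_, ht2⟩, _⟩, _⟩ := htp
      obtain ⟨⟨⟨ht1, _⟩, _⟩, _⟩ := htq
      have := Set.mem_iInter.mp ht2 i'
      have := Set.mem_iInter.mp this hii
      exact ht1 this
  have hV2cov : ∀ t : S.Pts, ∃ p, t ∈ V2 p := by
    intro t
    have hne : (Finset.univ.filter fun i : Fin m => t (e i) ≠ 0).Nonempty := by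
      obtain ⟨i, hi⟩ := hcov' t
      exact ⟨i, Finset.mem_filter.mpr ⟨Finset.mem_univ i, hi⟩⟩
    set i₀ := (Finset.univ.filter fun i : Fin m => t (e i) ≠ 0).min' hne with hi₀
    have hi₀mem : t (e i₀) ≠ 0 :=
      (Finset.mem_filter.mp ((Finset.univ.filter fun i : Fin m => t (e i) ≠ 0).min'_mem hne)).2
    have hi₀min : ∀ j : Fin m, j < i₀ → t (e j) = 0 := by
      intro j hj
      by_contra hjne
      have hjmem : j ∈ Finset.univ.filter fun i : Fin m => t (e i) ≠ 0 :=
        Finset.mem_filter.mpr ⟨Finset.mem_univ j, hjne⟩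
      exact absurd hj (not_lt.mpr (Finset.min'_le _ j hjmem))
    obtain ⟨hc1, hc2, hc3⟩ := hZ i₀ t hi₀mem
    have hdL : cdeg k n (φ t) ≤ L := hc2.trans (Finset.le_sup (Finset.mem_univ i₀))
    refine ⟨⟨i₀, ⟨cdeg k n (φ t), by omega⟩⟩, ⟨⟨⟨hi₀mem, ?_⟩, ?_⟩, ?_⟩⟩
    · exact Set.mem_iInter.mpr fun j => Set.mem_iInter.mpr fun hj => hi₀min j hj
    · exact (hc3 _).mpr le_rfl
    · show t ∉ Z i₀ (cdeg k n (φ t) - 1)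
      intro hmem
      have := (hc3 _).mp hmem
      omega
  refine ⟨m * (L + 1), fun j => V2 (finProdFinEquiv.symm j), ?_, ?_, ?_, ?_⟩
  · intro j
    exact hV2lc _
  · intro i j hij
    exact hV2disj _ _ (fun h => hij (finProdFinEquiv.symm.injective h))
  · rw [Set.eq_univ_iff_forall]
    intro t
    obtain ⟨p, hp⟩ := hV2cov t
    exact Set.mem_iUnion.mpr ⟨finProdFinEquiv p, by simpa [Equiv.symm_apply_apply] using hp⟩
  · intro j
    exact ⟨((finProdFinEquiv.symm j).2 : ℕ), fun t ht => hV2const _ t ht⟩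
end

section
/- The degree function deg: Bir(P^n) → ℕ is lower semicontinuous for the Zariski topology on Bir(P^n): for every d ≥ 1, the set Bir(P^n)_{≤d} of birational maps of degree ≤ d is closed. Moreover, a subset F ⊆ Bir(P^n) is closed if and only if F ∩ Bir(P^n)_{≤d} is closed for every d > 0. -/
open MvPolynomial

variable (k : Type) [Field k]

namespace CremonaAux

variable {k}

/-- polynomial-level dehomogenization -/
noncomputable def pdh (k : Type) [Field k] (n : ℕ) :
    MvPolynomial (Fin (n + 1)) k →ₐ[k] MvPolynomial (Fin n) k :=
  aeval (Fin.cons 1 X)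

lemma degree_eq_sum {m : ℕ} (f : Fin m →₀ ℕ) : f.degree = ∑ i, f i :=
  Finset.sum_subset (Finset.subset_univ _) fun _ _ hi => Finsupp.notMem_support_iff.mp hi

lemma pdh_monomial {n : ℕ} (σ : Fin (n + 1) →₀ ℕ) (c : k) :
    pdh k n (monomial σ c) = monomial (Finsupp.tail σ) c := by
  rw [pdh, aeval_monomial, monomial_eq, Finsupp.prod_pow, Finsupp.prod_pow,
    Fin.prod_univ_succ, Fin.cons_zero, one_pow, one_mul, algebraMap_eq]
  simp only [Fin.cons_succ, Finsupp.tail_apply]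

lemma coeff_pdh {n ℓ : ℕ} {g : MvPolynomial (Fin (n + 1)) k} (hg : g.IsHomogeneous ℓ)
    (σ : Fin (n + 1) →₀ ℕ) (hσ : σ.degree = ℓ) :
    coeff (Finsupp.tail σ) (pdh k n g) = coeff σ g := by
  classical
  conv_lhs => rw [g.as_sum, map_sum]
  rw [coeff_sum]
  simp only [pdh_monomial, coeff_monomial]
  rw [Finset.sum_eq_single σ]
  · rw [if_pos rfl]
  · intro τ hτ hne
    rw [if_neg]
    intro h
    apply hne
    have hτd : τ.degree = ℓ := by
      by_contra hc
      exact (Finsupp.mem_support_iff.mp hτ) (hg.coeff_eq_zero hc)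
    have hsum : ∑ j, Finsupp.tail τ j = ∑ j, Finsupp.tail σ j := by rw [h]
    simp only [Finsupp.tail_apply] at hsum
    have e1 := degree_eq_sum τ
    have e2 := degree_eq_sum σ
    rw [Fin.sum_univ_succ] at e1 e2
    have h0 : τ 0 = σ 0 := by omega
    calc τ = Finsupp.cons (τ 0) (Finsupp.tail τ) := (Finsupp.cons_tail τ).symm
    _ = Finsupp.cons (σ 0) (Finsupp.tail σ) := by rw [h0, h]
    _ = σ := Finsupp.cons_tail σ
  · intro hσs
    rw [if_pos rfl]
    exact MvPolynomial.notMem_support_iff.mp hσs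

lemma dehom_factor {n : ℕ} (g : MvPolynomial (Fin (n + 1)) k) :
    dehom k n g = algebraMap (MvPolynomial (Fin n) k) (RatFunField k n) (pdh k n g) := by
  have h : dehom k n =
      (IsScalarTower.toAlgHom k (MvPolynomial (Fin n) k) (RatFunField k n)).comp (pdh k n) := by
    rw [dehom, pdh, comp_aeval]
    congr 1
    funext i
    refine Fin.cases ?_ (fun j => ?_) i
    · simp only [Fin.cons_zero, map_one]
    · simp only [Fin.cons_succ, zCoord, IsScalarTower.coe_toAlgHom']
  rw [h]
  rfl

lemma eq_zero_of_dehom_eq_zero {n ℓ : ℕ} {g : MvPolynomial (Fin (n + 1)) k}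
    (hg : g.IsHomogeneous ℓ) (h : dehom k n g = 0) : g = 0 := by
  rw [dehom_factor] at h
  have hp : pdh k n g = 0 :=
    IsFractionRing.injective (MvPolynomial (Fin n) k) (RatFunField k n) (by rw [h, map_zero])
  ext σ
  rw [coeff_zero]
  by_cases hσ : σ.degree = ℓ
  · rw [← coeff_pdh hg σ hσ, hp, coeff_zero]
  · exact hg.coeff_eq_zero hσ

lemma dehom_inj {n ℓ : ℕ} {g g' : MvPolynomial (Fin (n + 1)) k}
    (hg : g.IsHomogeneous ℓ) (hg' : g'.IsHomogeneous ℓ) (h : dehom k n g = dehom k n g') :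
    g = g' :=
  sub_eq_zero.mp (eq_zero_of_dehom_eq_zero (hg.sub hg') (by rw [map_sub, h, sub_self]))

lemma dehom_ne_zero {n ℓ : ℕ} {g : MvPolynomial (Fin (n + 1)) k}
    (hg : g.IsHomogeneous ℓ) (h : g ≠ 0) : dehom k n g ≠ 0 :=
  fun hd => h (eq_zero_of_dehom_eq_zero hg hd)

end CremonaAux

namespace CremonaAux

variable {k}

/-! ### Representations: padding, degree lemmas -/

lemma represents_pad {n : ℕ} {f : Cremona k n} {d : ℕ}
    {g : Fin (n + 1) → MvPolynomial (Fin (n + 1)) k}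
    (h : Represents k n f d g) (e : ℕ) :
    Represents k n f (d + e) (fun i => g i * X 0 ^ e) := by
  obtain ⟨hhom, h0, hrel⟩ := h
  have hX : dehom k n (X (0 : Fin (n + 1))) = 1 := by
    rw [dehom, aeval_X, Fin.cons_zero]
  refine ⟨fun i => (hhom i).mul (isHomogeneous_X_pow _ _),
    mul_ne_zero h0 (pow_ne_zero _ (X_ne_zero _)), fun j => ?_⟩
  simp only [map_mul, map_pow, hX, one_pow, mul_one]
  exact hrel j

lemma cdeg_le_of_represents {n : ℕ} {f : Cremona k n} {d : ℕ}
    {g : Fin (n + 1) → MvPolynomial (Fin (n + 1)) k}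
    (hd : 1 ≤ d) (h : Represents k n f d g) : cdeg k n f ≤ d :=
  Nat.sInf_le ⟨hd, g, h⟩

lemma cdeg_spec {n : ℕ} {f : Cremona k n} {d₀ : ℕ}
    {g₀ : Fin (n + 1) → MvPolynomial (Fin (n + 1)) k} (h : Represents k n f d₀ g₀) :
    1 ≤ cdeg k n f ∧ ∃ g, Represents k n f (cdeg k n f) g := by
  have hne : {d | 1 ≤ d ∧ ∃ g, Represents k n f d g}.Nonempty :=
    ⟨d₀ + 1, Nat.le_add_left 1 d₀, _, represents_pad h 1⟩
  have hmem := Nat.sInf_mem hne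
  exact ⟨hmem.1, hmem.2⟩

lemma exists_represents_of_cdeg_le {n : ℕ} {f : Cremona k n} {d : ℕ} (hd : 1 ≤ d)
    {d₀ : ℕ} {g₀ : Fin (n + 1) → MvPolynomial (Fin (n + 1)) k}
    (h0 : Represents k n f d₀ g₀) (h : cdeg k n f ≤ d) :
    ∃ g, Represents k n f d g := by
  obtain ⟨h1, g, hg⟩ := cdeg_spec h0
  obtain ⟨e, he⟩ : ∃ e, cdeg k n f + e = d := ⟨d - cdeg k n f, by omega⟩
  exact ⟨_, he ▸ represents_pad hg e⟩

/-! ### Families -/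

lemma family_F0_ne_zero {n : ℕ} {S : AffSource k} {φ : S.Pts → Cremona k n} {a : S.A}
    {ℓ : ℕ} {F : Fin (n + 1) → MvPolynomial (Fin (n + 1)) S.A}
    (hfam : IsFamilyOn k n S φ a ℓ F) {t : S.Pts} (ht : t a ≠ 0) :
    MvPolynomial.map (t : S.A →+* k) (F 0) ≠ 0 := by
  obtain ⟨hhom, hpt⟩ := hfam
  obtain ⟨⟨i, hi⟩, hrel⟩ := hpt t ht
  intro h0
  apply hi
  have hd0 : dehom k n (MvPolynomial.map (t : S.A →+* k) (F 0)) = 0 := by rw [h0, map_zero]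
  have hall : ∀ i, MvPolynomial.map (t : S.A →+* k) (F i) = 0 := by
    intro i
    refine Fin.cases ?_ (fun j => ?_) i
    · exact h0
    · refine eq_zero_of_dehom_eq_zero ((hhom j.succ).map _) ?_
      rw [← hrel j, hd0, mul_zero]
  exact hall i

lemma family_represents {n : ℕ} {S : AffSource k} {φ : S.Pts → Cremona k n} {a : S.A}
    {ℓ : ℕ} {F : Fin (n + 1) → MvPolynomial (Fin (n + 1)) S.A}
    (hfam : IsFamilyOn k n S φ a ℓ F) {t : S.Pts} (ht : t a ≠ 0) :
    Represents k n (φ t) ℓ (fun i => MvPolynomial.map (t : S.A →+* k) (F i)) :=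
  ⟨fun i => (hfam.1 i).map _, family_F0_ne_zero hfam ht, fun j => (hfam.2 t ht).2 j⟩

/-! ### Monomials of fixed degree, coefficient vectors and the linear system -/

/-- Monomials of total degree `d` in `n+1` variables. -/
def Md (n d : ℕ) : Type := {σ : Fin (n + 1) →₀ ℕ // σ.degree = d}

instance (n d : ℕ) : Finite (Md n d) := by
  apply Finite.of_injective (fun σ : Md n d =>
    (fun i => (⟨σ.1 i, Nat.lt_succ_of_le (le_of_le_of_eq (Finsupp.le_degree i σ.1) σ.2)⟩ : Fin (d + 1)) :
      Fin (n + 1) → Fin (d + 1)))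
  intro σ τ h
  apply Subtype.ext
  apply Finsupp.ext
  intro i
  exact congrArg Fin.val (congrFun h i)

noncomputable instance (n d : ℕ) : Fintype (Md n d) := Fintype.ofFinite _

noncomputable instance (n d : ℕ) : DecidableEq (Md n d) := Classical.decEq _

/-- The coefficient of `x^τ` in `x^σ * p`. -/
noncomputable def cS {R : Type} [CommSemiring R] {n : ℕ} (τ σ : Fin (n + 1) →₀ ℕ)
    (p : MvPolynomial (Fin (n + 1)) R) : R :=
  coeff τ (monomial σ 1 * p)

lemma coeff_monomial_mul_cS {R : Type} [CommSemiring R] {n : ℕ} (τ σ : Fin (n + 1) →₀ ℕ)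
    (c : R) (p : MvPolynomial (Fin (n + 1)) R) :
    coeff τ (monomial σ c * p) = c * cS τ σ p := by
  rw [cS, ← coeff_C_mul, ← mul_assoc, C_mul_monomial, mul_one]

lemma map_cS {R S : Type} [CommSemiring R] [CommSemiring S] (f : R →+* S) {n : ℕ}
    (τ σ : Fin (n + 1) →₀ ℕ) (p : MvPolynomial (Fin (n + 1)) R) :
    f (cS τ σ p) = cS τ σ (MvPolynomial.map f p) := by
  rw [cS, cS, ← coeff_map, map_mul, map_monomial, map_one]

/-- The matrix of the linear system expressing that `(g_i)` of degree `d`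
satisfies `g_{j+1} F_0 = g_0 F_{j+1}`. -/
noncomputable def famMatrix {R : Type} [CommRing R] (n d e : ℕ)
    (F : Fin (n + 1) → MvPolynomial (Fin (n + 1)) R) :
    Matrix (Fin n × Md n e) (Fin (n + 1) × Md n d) R :=
  fun p q =>
    (if q.1 = 0 then -cS p.2.1 q.2.1 (F p.1.succ) else 0) +
      (if q.1 = p.1.succ then cS p.2.1 q.2.1 (F 0) else 0)

lemma famMatrix_map {R S : Type} [CommRing R] [CommRing S] (f : R →+* S) (n d e : ℕ)
    (F : Fin (n + 1) → MvPolynomial (Fin (n + 1)) R) :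
    (famMatrix n d e F).map f = famMatrix n d e (fun i => MvPolynomial.map f (F i)) := by
  funext p q
  simp only [famMatrix, Matrix.map_apply, map_add, apply_ite f, map_neg, map_zero, map_cS]

/-- The homogeneous polynomial of degree `d` with coefficient vector `v (i, ·)`. -/
noncomputable def gpoly {k : Type} [Field k] {n d : ℕ} (v : Fin (n + 1) × Md n d → k)
    (i : Fin (n + 1)) : MvPolynomial (Fin (n + 1)) k :=
  ∑ σ : Md n d, monomial σ.1 (v (i, σ))

lemma gpoly_isHomogeneous {n d : ℕ} (v : Fin (n + 1) × Md n d → k) (i : Fin (n + 1)) :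
    (gpoly v i).IsHomogeneous d :=
  IsHomogeneous.sum _ _ _ fun σ _ => isHomogeneous_monomial _ σ.2

lemma coeff_gpoly {n d : ℕ} (v : Fin (n + 1) × Md n d → k) (i : Fin (n + 1)) (σ : Md n d) :
    coeff σ.1 (gpoly v i) = v (i, σ) := by
  classical
  rw [gpoly, coeff_sum]
  rw [Finset.sum_eq_single σ]
  · rw [coeff_monomial, if_pos rfl]
  · intro τ _ hne
    rw [coeff_monomial, if_neg]
    exact fun h => hne (Subtype.ext h)
  · intro h
    exact absurd (Finset.mem_univ σ) h

lemma sum_monomial_coeff {n d : ℕ} {g : MvPolynomial (Fin (n + 1)) k}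
    (hg : g.IsHomogeneous d) :
    ∑ σ : Md n d, monomial σ.1 (coeff σ.1 g) = g := by
  have heq : ∑ σ : Md n d, monomial σ.1 (coeff σ.1 g) =
      gpoly (fun q : Fin (n + 1) × Md n d => coeff q.2.1 g) 0 := rfl
  rw [heq]
  ext τ
  by_cases hτ : τ.degree = d
  · show coeff (⟨τ, hτ⟩ : Md n d).1 _ = _
    exact coeff_gpoly _ 0 ⟨τ, hτ⟩
  · rw [(gpoly_isHomogeneous _ 0).coeff_eq_zero hτ, hg.coeff_eq_zero hτ]

lemma coeff_gpoly_mul {n d : ℕ} (v : Fin (n + 1) × Md n d → k) (i : Fin (n + 1))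
    (p : MvPolynomial (Fin (n + 1)) k) (τ : Fin (n + 1) →₀ ℕ) :
    coeff τ (gpoly v i * p) = ∑ σ : Md n d, v (i, σ) * cS τ σ.1 p := by
  rw [gpoly, Finset.sum_mul, coeff_sum]
  exact Finset.sum_congr rfl fun σ _ => coeff_monomial_mul_cS τ σ.1 _ p

lemma famMatrix_mulVec {n d e : ℕ} (F : Fin (n + 1) → MvPolynomial (Fin (n + 1)) k)
    (v : Fin (n + 1) × Md n d → k) (j : Fin n) (τ : Md n e) :
    (famMatrix n d e F).mulVec v (j, τ) =
      coeff τ.1 (gpoly v j.succ * F 0 - gpoly v 0 * F j.succ) := by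
  classical
  rw [coeff_sub, coeff_gpoly_mul, coeff_gpoly_mul]
  show ∑ q : Fin (n + 1) × Md n d, famMatrix n d e F (j, τ) q * v q = _
  rw [Fintype.sum_prod_type]
  have step : ∀ i : Fin (n + 1),
      ∑ σ : Md n d, famMatrix n d e F (j, τ) (i, σ) * v (i, σ) =
        (if i = 0 then ∑ σ : Md n d, -(cS τ.1 σ.1 (F j.succ) * v (i, σ)) else 0) +
          (if i = j.succ then ∑ σ : Md n d, cS τ.1 σ.1 (F 0) * v (i, σ) else 0) := by
    intro i
    simp only [famMatrix, add_mul, ite_mul, zero_mul, neg_mul]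
    rw [Finset.sum_add_distrib]
    congr 1 <;> split <;> simp
  rw [Finset.sum_congr rfl fun i _ => step i, Finset.sum_add_distrib,
    Fintype.sum_ite_eq' (0 : Fin (n + 1)), Fintype.sum_ite_eq' j.succ,
    Finset.sum_neg_distrib, neg_add_eq_sub]
  congr 1 <;> exact Finset.sum_congr rfl fun σ _ => mul_comm _ _

lemma famMatrix_mulVec_eq_zero_iff {n d ℓ : ℕ} {F : Fin (n + 1) → MvPolynomial (Fin (n + 1)) k}
    (hF : ∀ i, (F i).IsHomogeneous ℓ) (v : Fin (n + 1) × Md n d → k) :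
    (famMatrix n d (d + ℓ) F).mulVec v = 0 ↔
      ∀ j : Fin n, gpoly v j.succ * F 0 = gpoly v 0 * F j.succ := by
  constructor
  · intro h j
    have hhom : (gpoly v j.succ * F 0 - gpoly v 0 * F j.succ).IsHomogeneous (d + ℓ) :=
      ((gpoly_isHomogeneous v j.succ).mul (hF 0)).sub
        ((gpoly_isHomogeneous v 0).mul (hF j.succ))
    rw [← sub_eq_zero]
    ext τ
    rw [coeff_zero]
    by_cases hτ : τ.degree = d + ℓ
    · rw [← famMatrix_mulVec F v j ⟨τ, hτ⟩, h]
      rfl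
    · exact hhom.coeff_eq_zero hτ
  · intro h
    funext q
    obtain ⟨j, τ⟩ := q
    rw [famMatrix_mulVec, h j, sub_self, coeff_zero]
    rfl

end CremonaAux

namespace CremonaAux

variable {k}

/-! ### Representations of degree `d` vs. kernel vectors -/

lemma represents_iff_kernel {n ℓ : ℕ} {f : Cremona k n}
    {G : Fin (n + 1) → MvPolynomial (Fin (n + 1)) k}
    (hG : ∀ i, (G i).IsHomogeneous ℓ) (hG0 : G 0 ≠ 0)
    (hrel : ∀ j : Fin n, f (zCoord k n j) * dehom k n (G 0) = dehom k n (G j.succ)) (d : ℕ) :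
    (∃ g, Represents k n f d g) ↔
      ∃ v : Fin (n + 1) × Md n d → k, v ≠ 0 ∧ (famMatrix n d (d + ℓ) G).mulVec v = 0 := by
  constructor
  · rintro ⟨g, hghom, hg0, hgrel⟩
    refine ⟨fun q => coeff q.2.1 (g q.1), ?_, ?_⟩
    · obtain ⟨σ, hσ⟩ := exists_coeff_ne_zero hg0
      have hσd : σ.degree = d := by
        by_contra hc
        exact hσ ((hghom 0).coeff_eq_zero hc)
      intro hv0
      exact hσ (congrFun hv0 (0, ⟨σ, hσd⟩))
    · rw [famMatrix_mulVec_eq_zero_iff hG]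
      intro j
      have hrw : ∀ i, gpoly (fun q : Fin (n + 1) × Md n d => coeff q.2.1 (g q.1)) i = g i :=
        fun i => sum_monomial_coeff (hghom i)
      rw [hrw, hrw]
      apply dehom_inj ((hghom j.succ).mul (hG 0)) ((hghom 0).mul (hG j.succ))
      rw [map_mul, map_mul, ← hgrel j, ← hrel j]
      ring
  · rintro ⟨v, hv0, hker⟩
    have hprod := (famMatrix_mulVec_eq_zero_iff hG v).mp hker
    have hg0 : gpoly v 0 ≠ 0 := by
      intro h0
      apply hv0
      have hz : ∀ i, gpoly v i = 0 := by
        intro i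
        refine Fin.cases h0 (fun j => ?_) i
        have hj := hprod j
        rw [h0, zero_mul] at hj
        rcases mul_eq_zero.mp hj with h | h
        · exact h
        · exact absurd h hG0
      funext q
      rw [← coeff_gpoly v q.1 q.2, hz, coeff_zero]
      rfl
    refine ⟨gpoly v, fun i => gpoly_isHomogeneous v i, hg0, fun j => ?_⟩
    have hd := congrArg (dehom k n) (hprod j)
    rw [map_mul, map_mul, ← hrel j] at hd
    have hstep : dehom k n (gpoly v j.succ) * dehom k n (G 0) =
        f (zCoord k n j) * dehom k n (gpoly v 0) * dehom k n (G 0) := by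
      rw [hd]; ring
    have hcancel := mul_right_cancel₀ (dehom_ne_zero (hG 0) hG0) hstep
    rw [hcancel]

/-! ### A nonzero maximal minor of an injective matrix -/

open Matrix in
lemma exists_submatrix_det_ne_zero {K : Type*} [Field K] {ι κ : Type*}
    [Fintype ι] [Fintype κ] [DecidableEq ι] [DecidableEq κ] (M : Matrix ι κ K)
    (hM : Function.Injective M.mulVec) : ∃ r : κ → ι, (M.submatrix r id).det ≠ 0 := by
  classical
  have hinj : Function.Injective M.mulVecLin := by
    intro x y h
    apply hM
    rw [← M.mulVecLin_apply, ← M.mulVecLin_apply, h]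
  have hrank : M.rank = Fintype.card κ := by
    rw [Matrix.rank, LinearMap.finrank_range_of_inj hinj,
      Module.finrank_fintype_fun_eq_card]
  have hsurj : Function.Surjective (Mᵀ).mulVecLin := by
    rw [← LinearMap.range_eq_top]
    apply Submodule.eq_top_of_finrank_eq
    rw [show Module.finrank K ↥(LinearMap.range (Mᵀ).mulVecLin) = (Mᵀ).rank from rfl,
      Matrix.rank_transpose, hrank, Module.finrank_fintype_fun_eq_card]
  choose Xv hXv using fun b : κ => hsurj (Pi.single b 1)
  set Y : Matrix ι κ K := fun i b => Xv b i with hY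
  have hMY : Mᵀ * Y = 1 := by
    ext a b
    rw [Matrix.mul_apply, Matrix.one_apply]
    have hb := congrFun (hXv b) a
    rw [Matrix.mulVecLin_apply] at hb
    calc ∑ i, Mᵀ a i * Y i b = ((Mᵀ).mulVec (Xv b)) a := rfl
    _ = if a = b then 1 else 0 := by rw [hb, Pi.single_apply]
    
  have hdet1 : (Yᵀ * M).det = 1 := by
    rw [← Matrix.det_transpose, Matrix.transpose_mul, Matrix.transpose_transpose, hMY,
      Matrix.det_one]
  have hrows : (Yᵀ * M) = Matrix.of fun b => ∑ i, Y i b • M i := by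
    funext b c
    rw [Matrix.mul_apply]
    simp [Matrix.transpose_apply, Finset.sum_apply]
  have hexp : (Yᵀ * M).det = ∑ r : κ → ι, (∏ b, Y (r b) b) • (M.submatrix r id).det := by
    calc (Yᵀ * M).det
        = Matrix.detRowAlternating.toMultilinearMap (fun b => ∑ i, Y i b • M i) := by
          rw [show (Yᵀ * M).det = Matrix.detRowAlternating (Yᵀ * M) from rfl, hrows]
          rfl
    _ = ∑ r : κ → ι, Matrix.detRowAlternating.toMultilinearMap
          (fun b => Y (r b) b • M (r b)) := MultilinearMap.map_sum _ _
    _ = ∑ r : κ → ι, (∏ b, Y (r b) b) • (M.submatrix r id).det := by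
          refine Finset.sum_congr rfl fun r _ => ?_
          rw [MultilinearMap.map_smul_univ]
          rfl
  have hne : ∑ r : κ → ι, (∏ b, Y (r b) b) • (M.submatrix r id).det ≠ 0 := by
    rw [← hexp, hdet1]
    exact one_ne_zero
  obtain ⟨r, _, hr⟩ := Finset.exists_ne_zero_of_sum_ne_zero hne
  refine ⟨r, fun h => hr ?_⟩
  rw [h, smul_zero]

end CremonaAux

namespace CremonaAux

variable {k}

open Topology

/-! ### The Zariski topologies -/

lemma morphism_continuous {n : ℕ} {S : AffSource k} {φ : S.Pts → Cremona k n}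
    (hφ : IsMorphism k n S φ) : Continuous φ :=
  continuous_iSup_rng (i := S)
    (continuous_iSup_rng (i := ⟨φ, hφ⟩) continuous_coinduced_rng)

lemma closed_iff {n : ℕ} (C : Set (Cremona k n)) :
    IsClosed C ↔ ∀ (S : AffSource k) (φ : S.Pts → Cremona k n),
      IsMorphism k n S φ → IsClosed (φ ⁻¹' C) := by
  constructor
  · intro h S φ hφ
    exact h.preimage (morphism_continuous hφ)
  · intro h
    have hclosed : IsClosed[⨆ (S : AffSource k)
        (φ : { φ : S.Pts → Cremona k n // IsMorphism k n S φ }),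
        TopologicalSpace.coinduced φ.1 inferInstance] C := by
      rw [isClosed_iSup_iff]
      intro S
      rw [isClosed_iSup_iff]
      intro φ
      rw [isClosed_coinduced]
      exact h S φ.1 φ.2
    exact hclosed

lemma isOpen_ne_zero {S : AffSource k} (b : S.A) : IsOpen {t : S.Pts | t b ≠ 0} := by
  have hopen : IsOpen[TopologicalSpace.induced
      (fun t : S.Pts =>
        (⟨RingHom.ker (t : S.A →+* k), RingHom.ker_isPrime _⟩ : PrimeSpectrum S.A))
      inferInstance] {t : S.Pts | t b ≠ 0} := by
    rw [isOpen_induced_iff]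
    refine ⟨(PrimeSpectrum.basicOpen b : TopologicalSpace.Opens (PrimeSpectrum S.A)),
      (PrimeSpectrum.basicOpen b).2, ?_⟩
    ext t
    simp only [Set.mem_preimage, SetLike.mem_coe, PrimeSpectrum.mem_basicOpen,
      Set.mem_setOf_eq]
    exact not_congr RingHom.mem_ker
  exact hopen

/-! ### Closedness of `{cdeg ≤ d}` -/

lemma cdeg_le_closed (k : Type) [Field k] (n d : ℕ) :
    IsClosed {f : Cremona k n | cdeg k n f ≤ d} := by
  rw [closed_iff]
  intro S φ hφ
  rw [← isOpen_compl_iff, isOpen_iff_forall_mem_open]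
  intro t ht
  simp only [Set.mem_compl_iff, Set.mem_preimage, Set.mem_setOf_eq, not_le] at ht
  obtain ⟨a, hta, ℓ, F, hfam⟩ := hφ t
  rcases Nat.eq_zero_or_pos d with rfl | hd
  · refine ⟨{s : S.Pts | s a ≠ 0}, fun s hs => ?_, isOpen_ne_zero a, hta⟩
    simp only [Set.mem_compl_iff, Set.mem_preimage, Set.mem_setOf_eq, not_le]
    have h1 := (cdeg_spec (family_represents hfam hs)).1
    omega
  · set tR : S.A →+* k := (t : S.A →+* k) with htR
    have hGhom : ∀ i, (MvPolynomial.map tR (F i)).IsHomogeneous ℓ := fun i => (hfam.1 i).map _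
    have hG0 : MvPolynomial.map tR (F 0) ≠ 0 := family_F0_ne_zero hfam hta
    have hGrel := (hfam.2 t hta).2
    set M := famMatrix n d (d + ℓ) F with hM
    have hker : ∀ v : Fin (n + 1) × Md n d → k, (M.map tR).mulVec v = 0 → v = 0 := by
      intro v hv
      by_contra hvne
      have hkv : (famMatrix n d (d + ℓ) (fun i => MvPolynomial.map tR (F i))).mulVec v = 0 := by
        rw [← famMatrix_map]
        exact hv
      obtain ⟨g, hg⟩ := (represents_iff_kernel hGhom hG0 hGrel d).mpr ⟨v, hvne, hkv⟩
      exact absurd (cdeg_le_of_represents hd hg) (not_le.mpr ht)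
    have hinj : Function.Injective (M.map tR).mulVec := by
      intro x y hxy
      have hz : x - y = 0 := by
        apply hker
        have hlin := (M.map tR).mulVecLin.map_sub x y
        rw [Matrix.mulVecLin_apply, Matrix.mulVecLin_apply, Matrix.mulVecLin_apply] at hlin
        rw [hlin, hxy, sub_self]
      exact sub_eq_zero.mp hz
    obtain ⟨r, hr⟩ := exists_submatrix_det_ne_zero (M.map tR) hinj
    set δ : S.A := (M.submatrix r id).det with hδ
    have hmapdet : ∀ s : S.Pts,
        (s : S.A →+* k) δ = ((M.map (s : S.A →+* k)).submatrix r id).det := by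
      intro s
      rw [hδ, RingHom.map_det]
      rfl
    have htδ : t δ ≠ 0 := by
      rw [show t δ = tR δ from rfl, hmapdet t]
      exact hr
    refine ⟨{s : S.Pts | s a ≠ 0} ∩ {s : S.Pts | s δ ≠ 0}, fun s hs => ?_,
      (isOpen_ne_zero a).inter (isOpen_ne_zero δ), hta, htδ⟩
    obtain ⟨hsa, hsδ⟩ := hs
    simp only [Set.mem_compl_iff, Set.mem_preimage, Set.mem_setOf_eq, not_le]
    by_contra hle
    push_neg at hle
    obtain ⟨g, hg⟩ := exists_represents_of_cdeg_le hd (family_represents hfam hsa) hle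
    set sR : S.A →+* k := (s : S.A →+* k) with hsR
    obtain ⟨v, hvne, hv⟩ := (represents_iff_kernel (fun i => (hfam.1 i).map sR)
      (family_F0_ne_zero hfam hsa) ((hfam.2 s hsa).2) d).mp ⟨g, hg⟩
    rw [← famMatrix_map sR n d (d + ℓ) F] at hv
    have hsub : ((M.map sR).submatrix r id).mulVec v = 0 := by
      funext a'
      show (M.map sR).mulVec v (r a') = 0
      rw [hv]
      rfl
    have hdet0 := Matrix.exists_mulVec_eq_zero_iff.mp ⟨v, hvne, hsub⟩
    apply hsδ
    show sR δ = 0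
    rw [hmapdet s, hdet0]

end CremonaAux

/-- The degree function `deg : Bir(ℙⁿ) → ℕ` is lower semicontinuous for the Zariski
topology: for every `d` the set `Bir(ℙⁿ)_{≤ d}` of transformations of degree `≤ d` is
closed.  Moreover a subset `F ⊆ Bir(ℙⁿ)` is closed if and only if `F ∩ Bir(ℙⁿ)_{≤ d}`
is closed for every `d > 0`. -/
theorem cdeg_lowerSemicontinuous (k : Type) [Field k] [IsAlgClosed k]
    (n : ℕ) (hn : 1 ≤ n) :
    (∀ d : ℕ, IsClosed {f : Cremona k n | cdeg k n f ≤ d}) ∧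
    (∀ F : Set (Cremona k n),
      IsClosed F ↔ ∀ d : ℕ, 0 < d → IsClosed (F ∩ {f : Cremona k n | cdeg k n f ≤ d})) := by
  refine ⟨fun d => CremonaAux.cdeg_le_closed k n d, fun F => ⟨fun hF d _ => hF.inter (CremonaAux.cdeg_le_closed k n d), fun h => ?_⟩⟩
  rw [CremonaAux.closed_iff]
  intro S φ hφ
  rw [← isOpen_compl_iff, isOpen_iff_forall_mem_open]
  intro t ht
  obtain ⟨a, hta, ℓ, Ffam, hfam⟩ := hφ t
  have hcont := CremonaAux.morphism_continuous hφ
  have hC' : IsClosed (φ ⁻¹' (F ∩ {f | cdeg k n f ≤ ℓ + 1})) :=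
    (h (ℓ + 1) (Nat.succ_pos ℓ)).preimage hcont
  refine ⟨{s : S.Pts | s a ≠ 0} ∩ (φ ⁻¹' (F ∩ {f | cdeg k n f ≤ ℓ + 1}))ᶜ,
    fun s hs => ?_, (CremonaAux.isOpen_ne_zero a).inter hC'.isOpen_compl, hta, ?_⟩
  · obtain ⟨hsa, hsC⟩ := hs
    simp only [Set.mem_compl_iff, Set.mem_preimage, Set.mem_inter_iff, Set.mem_setOf_eq] at hsC ⊢
    intro hsF
    apply hsC
    refine ⟨hsF, ?_⟩
    have hrep := CremonaAux.represents_pad (CremonaAux.family_represents hfam hsa) 1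
    exact CremonaAux.cdeg_le_of_represents (Nat.le_add_left 1 ℓ) hrep
  · simp only [Set.mem_compl_iff, Set.mem_preimage, Set.mem_inter_iff] at ht ⊢
    exact fun hC => ht hC.1
end

section
/- The Zariski topology on Bir(P^n) is T1: every singleton {f} ⊆ Bir(P^n) is closed. Consequently, for any two morphisms φ, ψ: T → Bir(P^n) from a k-variety T, the set {t ∈ T : φ_t = ψ_t} is closed in T. -/
open MvPolynomial

variable (k : Type) [Field k]

-- dehomogenization landing in the polynomial ring
noncomputable def deh (n : ℕ) : MvPolynomial (Fin (n + 1)) k →ₐ[k] MvPolynomial (Fin n) k :=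
  aeval (Fin.cons 1 X)

lemma degree_univ {q : ℕ} (m : Fin q →₀ ℕ) : m.degree = ∑ i, m i := by
  rw [Finsupp.degree]
  exact Finset.sum_subset (Finset.subset_univ _)
    (fun i _ hi => Finsupp.notMem_support_iff.mp hi)

lemma degree_cons {n : ℕ} (a : ℕ) (m : Fin n →₀ ℕ) :
    (Finsupp.cons a m).degree = a + m.degree := by
  rw [degree_univ, degree_univ, Fin.sum_univ_succ, Finsupp.cons_zero]
  simp [Finsupp.cons_succ]

lemma degree_eq_sum {n : ℕ} (m : Fin n →₀ ℕ) : m.degree = m.sum fun _ e => e := rfl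

lemma dehom_eq (n : ℕ) (p : MvPolynomial (Fin (n + 1)) k) :
    dehom k n p = algebraMap (MvPolynomial (Fin n) k) (RatFunField k n) (deh k n p) := by
  have h : dehom k n =
      (IsScalarTower.toAlgHom k (MvPolynomial (Fin n) k) (RatFunField k n)).comp (deh k n) := by
    apply MvPolynomial.algHom_ext
    intro i
    induction i using Fin.cases with
    | zero => simp [dehom, deh]
    | succ j => simp [dehom, deh, zCoord]
  rw [h]; rfl

lemma deh_monomial (n : ℕ) (m : Fin (n + 1) →₀ ℕ) (c : k) :
    deh k n (monomial m c) = monomial m.tail c := by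
  rw [deh, aeval_monomial, monomial_eq, Finsupp.prod_pow, Finsupp.prod_pow,
    Fin.prod_univ_succ]
  simp [Finsupp.tail_apply, Fin.cons_succ, Fin.cons_zero, algebraMap_eq]

lemma deh_ne_zero {n D : ℕ} {h : MvPolynomial (Fin (n + 1)) k}
    (hh : h.IsHomogeneous D) (h0 : h ≠ 0) : deh k n h ≠ 0 := by
  obtain ⟨m, hm⟩ : ∃ m, coeff m h ≠ 0 := by
    by_contra hc; push_neg at hc
    exact h0 (MvPolynomial.ext _ _ (by simpa using hc))
  have hmdeg : m.degree = D := by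
    rw [Finsupp.degree_eq_weight_one]; exact hh hm
  have key : coeff m.tail (deh k n h) = coeff m h := by
    conv_lhs => rw [h.as_sum, map_sum]
    rw [coeff_sum]
    rw [Finset.sum_congr rfl fun v _ => by rw [deh_monomial]]
    rw [Finset.sum_eq_single m]
    · rw [coeff_monomial, if_pos rfl]
    · intro v hv hvm
      rw [coeff_monomial, if_neg]
      intro he
      apply hvm
      have hvdeg : v.degree = D := by
        rw [Finsupp.degree_eq_weight_one]; exact hh (mem_support_iff.mp hv)
      have h1 : v.degree = v 0 + v.tail.degree := by
        conv_lhs => rw [← Finsupp.cons_tail v]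
        rw [degree_cons]
      have h2 : m.degree = m 0 + m.tail.degree := by
        conv_lhs => rw [← Finsupp.cons_tail m]
        rw [degree_cons]
      have hv0 : v 0 = m 0 := by
        rw [hvdeg] at h1; rw [hmdeg] at h2; rw [he] at h1; omega
      rw [← Finsupp.cons_tail v, ← Finsupp.cons_tail m, he, hv0]
    · intro hms; exact absurd (mem_support_iff.mpr hm) hms
  intro hc
  rw [hc, coeff_zero] at key
  exact hm key.symm

lemma dehom_ne_zero {n D : ℕ} {h : MvPolynomial (Fin (n + 1)) k}
    (hh : h.IsHomogeneous D) (h0 : h ≠ 0) : dehom k n h ≠ 0 := by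
  rw [dehom_eq]
  intro hc
  exact deh_ne_zero k hh h0 (IsFractionRing.injective _ _ (by rw [hc, map_zero]))

lemma dehom_eq_zero {n D : ℕ} {h : MvPolynomial (Fin (n + 1)) k}
    (hh : h.IsHomogeneous D) (hc : dehom k n h = 0) : h = 0 := by
  by_contra h0; exact dehom_ne_zero k hh h0 hc

noncomputable def hz (n D : ℕ) (p : MvPolynomial (Fin n) k) :
    MvPolynomial (Fin (n + 1)) k :=
  ∑ m ∈ p.support, monomial (Finsupp.cons (D - m.degree) m) (coeff m p)

lemma hz_isHomogeneous {n D : ℕ} {p : MvPolynomial (Fin n) k} (hp : p.totalDegree ≤ D) :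
    (hz k n D p).IsHomogeneous D := by
  apply IsHomogeneous.sum
  intro m hm
  apply isHomogeneous_monomial
  rw [degree_cons]
  have : m.degree ≤ D := le_trans (by rw [degree_eq_sum]; exact le_totalDegree hm) hp
  omega

lemma deh_hz (n D : ℕ) (p : MvPolynomial (Fin n) k) : deh k n (hz k n D p) = p := by
  rw [hz, map_sum]
  simp_rw [deh_monomial, Finsupp.tail_cons]
  exact (as_sum p).symm

lemma dehom_hz (n D : ℕ) (p : MvPolynomial (Fin n) k) :
    dehom k n (hz k n D p) = algebraMap (MvPolynomial (Fin n) k) (RatFunField k n) p := by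
  rw [dehom_eq, deh_hz]

lemma exists_rep (n : ℕ) (f : Cremona k n) :
    ∃ (d : ℕ) (g : Fin (n + 1) → MvPolynomial (Fin (n + 1)) k),
      (∀ i, (g i).IsHomogeneous d) ∧ dehom k n (g 0) ≠ 0 ∧
      ∀ j : Fin n, f (zCoord k n j) * dehom k n (g 0) = dehom k n (g j.succ) := by
  have H : ∀ j : Fin n, ∃ (p q : MvPolynomial (Fin n) k), q ≠ 0 ∧
      f (zCoord k n j) * algebraMap _ (RatFunField k n) q = algebraMap _ _ p := by
    intro j
    obtain ⟨⟨p, q⟩, h⟩ :=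
      IsLocalization.surj (nonZeroDivisors (MvPolynomial (Fin n) k)) (f (zCoord k n j))
    exact ⟨p, q, nonZeroDivisors.ne_zero q.2, h⟩
  choose p q hq0 hfq using H
  classical
  set Q : MvPolynomial (Fin n) k := ∏ j, q j with hQdef
  have hQ : Q ≠ 0 := Finset.prod_ne_zero_iff.mpr fun j _ => hq0 j
  set P : Fin n → MvPolynomial (Fin n) k :=
    fun j => p j * ∏ i ∈ Finset.univ.erase j, q i with hPdef
  have hPQ : ∀ j, f (zCoord k n j) * algebraMap _ (RatFunField k n) Q = algebraMap _ _ (P j) := by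
    intro j
    have hQsplit : Q = q j * ∏ i ∈ Finset.univ.erase j, q i :=
      (Finset.mul_prod_erase _ _ (Finset.mem_univ j)).symm
    rw [hQsplit, map_mul, ← mul_assoc, hfq j, ← map_mul]
  set D : ℕ := max Q.totalDegree (Finset.univ.sup fun j => (P j).totalDegree) with hDdef
  have hDQ : Q.totalDegree ≤ D := le_max_left _ _
  have hDP : ∀ j, (P j).totalDegree ≤ D := fun j =>
    le_trans (Finset.le_sup (f := fun j => (P j).totalDegree) (Finset.mem_univ j)) (le_max_right _ _)
  refine ⟨D, Fin.cons (hz k n D Q) fun j => hz k n D (P j), ?_, ?_, ?_⟩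
  · intro i
    induction i using Fin.cases with
    | zero => rw [Fin.cons_zero]; exact hz_isHomogeneous k hDQ
    | succ j =>
      rw [Fin.cons_succ]
      exact hz_isHomogeneous k (hDP j)
  · rw [Fin.cons_zero, dehom_hz]
    intro hc
    exact hQ (IsFractionRing.injective _ _ (by rw [hc, map_zero]))
  · intro j
    rw [Fin.cons_zero, Fin.cons_succ, dehom_hz, dehom_hz]
    exact hPQ j

lemma cremona_ext {n : ℕ} (f g : Cremona k n)
    (h : ∀ j, f (zCoord k n j) = g (zCoord k n j)) : f = g := by
  have hr : (f : RatFunField k n →+* RatFunField k n) =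
      (g : RatFunField k n →+* RatFunField k n) := by
    apply IsLocalization.ringHom_ext (nonZeroDivisors (MvPolynomial (Fin n) k))
    apply MvPolynomial.ringHom_ext
    · intro c
      have hc : (algebraMap (MvPolynomial (Fin n) k) (RatFunField k n)) (C c) =
          algebraMap k (RatFunField k n) c := by
        rw [IsScalarTower.algebraMap_apply k (MvPolynomial (Fin n) k) (RatFunField k n) c,
          algebraMap_eq]
      simp only [RingHom.coe_comp, Function.comp_apply, hc]
      rw [show ((f : RatFunField k n →+* RatFunField k n) (algebraMap k (RatFunField k n) c)) =
        f (algebraMap k (RatFunField k n) c) from rfl]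
      rw [show ((g : RatFunField k n →+* RatFunField k n) (algebraMap k (RatFunField k n) c)) =
        g (algebraMap k (RatFunField k n) c) from rfl]
      rw [AlgEquiv.commutes, AlgEquiv.commutes]
    · intro j
      simp only [RingHom.coe_comp, Function.comp_apply]
      exact h j
  exact AlgEquiv.ext fun x => RingHom.congr_fun hr x

-- basic open sets
lemma isOpen_ne_zero {S : AffSource k} (c : S.A) : IsOpen {t : S.Pts | t c ≠ 0} := by
  have : {t : S.Pts | t c ≠ 0} =
      (fun t : S.Pts =>
        (⟨RingHom.ker (t : S.A →+* k), RingHom.ker_isPrime _⟩ : PrimeSpectrum S.A)) ⁻¹'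
        (PrimeSpectrum.zeroLocus {c})ᶜ := by
    ext t
    simp [PrimeSpectrum.mem_zeroLocus, Set.singleton_subset_iff, RingHom.mem_ker]
  rw [this]
  exact isOpen_induced (PrimeSpectrum.isClosed_zeroLocus _).isOpen_compl

-- nonvanishing of F_0 at a point of the family
lemma family_dehom_ne_zero {n ℓ : ℕ} {S : AffSource k}
    {F : Fin (n + 1) → MvPolynomial (Fin (n + 1)) S.A} {t : S.Pts} {φt : Cremona k n}
    (hhom : ∀ i, (F i).IsHomogeneous ℓ)
    (hex : ∃ i, MvPolynomial.map (t : S.A →+* k) (F i) ≠ 0)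
    (heq : ∀ j : Fin n,
      φt (zCoord k n j) * dehom k n (MvPolynomial.map (t : S.A →+* k) (F 0)) =
        dehom k n (MvPolynomial.map (t : S.A →+* k) (F j.succ))) :
    dehom k n (MvPolynomial.map (t : S.A →+* k) (F 0)) ≠ 0 := by
  intro hc
  have h0 : MvPolynomial.map (t : S.A →+* k) (F 0) = 0 :=
    dehom_eq_zero k ((hhom 0).map _) hc
  obtain ⟨i, hi⟩ := hex
  induction i using Fin.cases with
  | zero => exact hi h0
  | succ j =>
    apply hi
    apply dehom_eq_zero k ((hhom j.succ).map _)
    rw [← heq j, hc, mul_zero]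

lemma coincidence_closed (n : ℕ) (S : AffSource k) (φ ψ : S.Pts → Cremona k n)
    (hφ : IsMorphism k n S φ) (hψ : IsMorphism k n S ψ) :
    IsClosed {t : S.Pts | φ t = ψ t} := by
  rw [← isOpen_compl_iff, isOpen_iff_forall_mem_open]
  intro t0 ht0
  obtain ⟨a, ha, ℓF, F, hFhom, hFfam⟩ := hφ t0
  obtain ⟨b, hb, ℓG, G, hGhom, hGfam⟩ := hψ t0
  set P : Fin n → MvPolynomial (Fin (n + 1)) S.A :=
    fun j => F j.succ * G 0 - G j.succ * F 0 with hP
  have hmapP : ∀ (t : S.Pts) (j : Fin n),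
      MvPolynomial.map (t : S.A →+* k) (P j) =
        MvPolynomial.map (t : S.A →+* k) (F j.succ) * MvPolynomial.map (t : S.A →+* k) (G 0) -
          MvPolynomial.map (t : S.A →+* k) (G j.succ) * MvPolynomial.map (t : S.A →+* k) (F 0) := by
    intro t j
    simp only [hP, map_sub, map_mul]
  have main : ∀ t : S.Pts, t a ≠ 0 → t b ≠ 0 →
      (φ t = ψ t ↔ ∀ j, MvPolynomial.map (t : S.A →+* k) (P j) = 0) := by
    intro t hta htb
    obtain ⟨hexF, heqF⟩ := hFfam t hta
    obtain ⟨hexG, heqG⟩ := hGfam t htb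
    have hF0 := family_dehom_ne_zero k hFhom hexF heqF
    have hG0 := family_dehom_ne_zero k hGhom hexG heqG
    have hPhom : ∀ j, (MvPolynomial.map (t : S.A →+* k) (P j)).IsHomogeneous (ℓF + ℓG) := by
      intro j
      rw [hmapP]
      exact (((hFhom j.succ).map _).mul ((hGhom 0).map _)).sub
        (Nat.add_comm ℓG ℓF ▸ (((hGhom j.succ).map _).mul ((hFhom 0).map _)))
    constructor
    · intro heq j
      apply dehom_eq_zero k (hPhom j)
      rw [hmapP, map_sub, map_mul, map_mul, ← heqF j, ← heqG j, heq]
      ring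
    · intro hzero
      apply cremona_ext
      intro j
      have h1 : dehom k n (MvPolynomial.map (t : S.A →+* k) (F j.succ)) *
            dehom k n (MvPolynomial.map (t : S.A →+* k) (G 0)) =
          dehom k n (MvPolynomial.map (t : S.A →+* k) (G j.succ)) *
            dehom k n (MvPolynomial.map (t : S.A →+* k) (F 0)) := by
        have h2 := congrArg (dehom k n) (hzero j)
        rw [hmapP, map_sub, map_mul, map_mul, map_zero, sub_eq_zero] at h2
        exact h2
      have h3 : φ t (zCoord k n j) *
            (dehom k n (MvPolynomial.map (t : S.A →+* k) (F 0)) *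
              dehom k n (MvPolynomial.map (t : S.A →+* k) (G 0))) =
          ψ t (zCoord k n j) *
            (dehom k n (MvPolynomial.map (t : S.A →+* k) (F 0)) *
              dehom k n (MvPolynomial.map (t : S.A →+* k) (G 0))) := by
        calc φ t (zCoord k n j) * (dehom k n (MvPolynomial.map (t : S.A →+* k) (F 0)) *
              dehom k n (MvPolynomial.map (t : S.A →+* k) (G 0)))
            = (φ t (zCoord k n j) * dehom k n (MvPolynomial.map (t : S.A →+* k) (F 0))) *
              dehom k n (MvPolynomial.map (t : S.A →+* k) (G 0)) := by ring
          _ = dehom k n (MvPolynomial.map (t : S.A →+* k) (F j.succ)) *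
              dehom k n (MvPolynomial.map (t : S.A →+* k) (G 0)) := by rw [heqF j]
          _ = dehom k n (MvPolynomial.map (t : S.A →+* k) (G j.succ)) *
              dehom k n (MvPolynomial.map (t : S.A →+* k) (F 0)) := h1
          _ = (ψ t (zCoord k n j) * dehom k n (MvPolynomial.map (t : S.A →+* k) (G 0))) *
              dehom k n (MvPolynomial.map (t : S.A →+* k) (F 0)) := by rw [heqG j]
          _ = ψ t (zCoord k n j) * (dehom k n (MvPolynomial.map (t : S.A →+* k) (F 0)) *
              dehom k n (MvPolynomial.map (t : S.A →+* k) (G 0))) := by ring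
      exact mul_right_cancel₀ (mul_ne_zero hF0 hG0) h3
  refine ⟨({t : S.Pts | t a ≠ 0} ∩ {t : S.Pts | t b ≠ 0}) ∩
      ⋃ (j : Fin n) (m : Fin (n + 1) →₀ ℕ), {t : S.Pts | t (coeff m (P j)) ≠ 0}, ?_, ?_, ?_⟩
  · rintro t ⟨⟨hta, htb⟩, hU⟩
    simp only [Set.mem_iUnion, Set.mem_setOf_eq] at hU
    obtain ⟨j, m, hjm⟩ := hU
    intro hEq
    have h4 := (main t hta htb).mp hEq j
    apply hjm
    have h5 : coeff m (MvPolynomial.map (t : S.A →+* k) (P j)) = 0 := by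
      rw [h4, coeff_zero]
    rwa [coeff_map] at h5
  · exact ((isOpen_ne_zero k a).inter (isOpen_ne_zero k b)).inter
      (isOpen_iUnion fun j => isOpen_iUnion fun m => isOpen_ne_zero k _)
  · refine ⟨⟨ha, hb⟩, ?_⟩
    by_contra hc
    simp only [Set.mem_iUnion, Set.mem_setOf_eq, not_exists, not_not] at hc
    apply ht0
    exact (main t0 ha hb).mpr fun j =>
      MvPolynomial.ext _ _ fun m => by rw [coeff_map, coeff_zero]; exact hc j m

lemma const_isMorphism (n : ℕ) (S : AffSource k) (f : Cremona k n) :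
    IsMorphism k n S fun _ => f := by
  obtain ⟨d, g, hgh, hg0, hgeq⟩ := exists_rep k n f
  intro t
  refine ⟨1, by simp, d, fun i => MvPolynomial.map (algebraMap k S.A) (g i),
    fun i => (hgh i).map _, ?_⟩
  intro s _
  have hmm : ∀ i, MvPolynomial.map (s : S.A →+* k)
      (MvPolynomial.map (algebraMap k S.A) (g i)) = g i := by
    intro i
    rw [MvPolynomial.map_map]
    have hcomp : (s : S.A →+* k).comp (algebraMap k S.A) = RingHom.id k := by
      ext c
      simp [AlgHom.commutes]
    rw [hcomp, MvPolynomial.map_id]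
  constructor
  · exact ⟨0, by rw [hmm]; intro hc; exact hg0 (by rw [hc, map_zero])⟩
  · intro j
    rw [hmm, hmm]
    exact hgeq j

lemma isOpen_cremona_iff (n : ℕ) (s : Set (Cremona k n)) :
    IsOpen s ↔ ∀ (S : AffSource k)
      (φ : { φ : S.Pts → Cremona k n // IsMorphism k n S φ }), IsOpen (φ.1 ⁻¹' s) := by
  show @IsOpen _ (⨆ (S : AffSource k) (φ : { φ : S.Pts → Cremona k n // IsMorphism k n S φ }),
      TopologicalSpace.coinduced φ.1 inferInstance) s ↔ _
  rw [isOpen_iSup_iff]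
  exact forall_congr' fun S => by rw [isOpen_iSup_iff]; exact forall_congr' fun φ => isOpen_coinduced

/-- The Zariski topology of `Bir(ℙⁿ)` is T1 (singletons are closed); consequently, for
any two morphisms `φ, ψ : T → Bir(ℙⁿ)` the coincidence set `{t | φ_t = ψ_t}` is closed
in `T`. -/
theorem cremona_t1Space (k : Type) [Field k] [IsAlgClosed k] (n : ℕ) (hn : 1 ≤ n) :
    T1Space (Cremona k n) ∧
    ∀ (S : AffSource k) (φ ψ : S.Pts → Cremona k n),
      IsMorphism k n S φ → IsMorphism k n S ψ →
      IsClosed {t : S.Pts | φ t = ψ t} := by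
  refine ⟨⟨fun f => ?_⟩, fun S φ ψ hφ hψ => coincidence_closed k n S φ ψ hφ hψ⟩
  rw [← isOpen_compl_iff, isOpen_cremona_iff]
  intro S φ
  have hpre : φ.1 ⁻¹' {f}ᶜ = {t : S.Pts | φ.1 t = f}ᶜ := rfl
  rw [hpre, isOpen_compl_iff]
  exact coincidence_closed k n S φ.1 (fun _ => f) φ.2 (const_isMorphism k n S f)
end

section
/- For every f ∈ Bir(P^n), the centralizer {g ∈ Bir(P^n) : g∘f = f∘g} is closed in the Zariski topology. Consequently, for every subgroup G ⊆ Bir(P^n), the centralizer C_{Bir(P^n)}(G) = {g : g∘h = h∘g for all h ∈ G} is closed. -/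
open MvPolynomial

variable (k : Type) [Field k]

section Aux
variable {k : Type} [Field k]

lemma fin_comp_cons {α β : Type*} {n : ℕ} (h : α → β) (a : α) (g : Fin n → α) :
    (fun i => h (Fin.cons (α := fun _ => α) a g i)) = Fin.cons (h a) (fun j => h (g j)) := by
  funext i
  refine Fin.cases ?_ (fun j => ?_) i <;> simp

lemma eval2_smul_hom {S σ : Type*} [CommRing S] (φ : k →+* S) {p : MvPolynomial σ k} {m : ℕ}
    (hp : p.IsHomogeneous m) (c : S) (w : σ → S) :
    eval₂ φ (fun i => c * w i) p = c ^ m * eval₂ φ w p := by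
  conv_lhs => rw [p.as_sum]
  conv_rhs => rw [p.as_sum]
  rw [eval₂_sum, eval₂_sum, Finset.mul_sum]
  refine Finset.sum_congr rfl fun d hd => ?_
  rw [eval₂_monomial, eval₂_monomial]
  have hdm : d.degree = m := by
    have := hp (mem_support_iff.mp hd)
    rw [Finsupp.degree_eq_weight_one]; exact this
  have hprod : (d.prod fun i e => (c * w i) ^ e) = c ^ d.degree * d.prod fun i e => w i ^ e := by
    rw [Finsupp.prod, Finsupp.prod, Finsupp.degree_apply, ← Finset.prod_pow_eq_pow_sum,
      ← Finset.prod_mul_distrib]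
    exact Finset.prod_congr rfl fun i _ => mul_pow _ _ _
  rw [hprod, hdm]; ring

lemma aeval_smul_hom {S σ : Type*} [CommRing S] [Algebra k S] {p : MvPolynomial σ k} {m : ℕ}
    (hp : p.IsHomogeneous m) (c : S) (w : σ → S) :
    aeval (fun i => c * w i) p = c ^ m * aeval w p := by
  rw [aeval_def, aeval_def]; exact eval2_smul_hom _ hp c w

lemma eval_smul_hom {σ : Type*} {p : MvPolynomial σ k} {m : ℕ}
    (hp : p.IsHomogeneous m) (c : k) (w : σ → k) :
    eval (fun i => c * w i) p = c ^ m * eval w p :=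
  eval2_smul_hom _ hp c w

lemma exists_homogenization {n : ℕ} (r : MvPolynomial (Fin n) k) {N : ℕ} (hN : r.totalDegree ≤ N) :
    ∃ h : MvPolynomial (Fin (n + 1)) k, h.IsHomogeneous N ∧ aeval (Fin.cons 1 X) h = r := by
  refine ⟨∑ m ∈ r.support, X 0 ^ (N - m.degree) * rename Fin.succ (monomial m (coeff m r)), ?_, ?_⟩
  · refine IsHomogeneous.sum _ _ _ fun m hm => ?_
    have h1 : ((X (0 : Fin (n + 1)) : MvPolynomial (Fin (n+1)) k) ^ (N - m.degree)).IsHomogeneous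
        (1 * (N - m.degree)) := (isHomogeneous_X k 0).pow _
    have h2 : ((rename Fin.succ (monomial m (coeff m r)) : MvPolynomial (Fin (n+1)) k)).IsHomogeneous
        m.degree := (isHomogeneous_monomial _ rfl).rename_isHomogeneous
    have := h1.mul h2
    rw [one_mul] at this
    have h3 := le_totalDegree (p := r) hm
    have hle : m.degree ≤ N := le_trans h3 hN
    rwa [Nat.sub_add_cancel hle] at this
  · rw [map_sum]
    conv_rhs => rw [r.as_sum]
    refine Finset.sum_congr rfl fun m hm => ?_
    rw [map_mul, map_pow, aeval_X, Fin.cons_zero, one_pow, one_mul, aeval_rename]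
    have : (Fin.cons 1 (X : Fin n → MvPolynomial (Fin n) k) ∘ Fin.succ) = X := by
      funext j; simp
    rw [this, aeval_X_left_apply]

lemma map_mapk {A : Type} [CommRing A] [Algebra k A] (t : A →ₐ[k] k) {σ : Type*}
    (r : MvPolynomial σ k) :
    MvPolynomial.map (t : A →+* k) (MvPolynomial.map (algebraMap k A) r) = r := by
  rw [MvPolynomial.map_map]
  have : (t : A →+* k).comp (algebraMap k A) = RingHom.id k := by
    ext x; simp
  rw [this, MvPolynomial.map_id]

lemma map_aeval_comm {A : Type} [CommRing A] [Algebra k A] (t : A →ₐ[k] k) {σ τ : Type*}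
    (Fv : σ → MvPolynomial τ A) (G : MvPolynomial σ A) :
    MvPolynomial.map (t : A →+* k) (aeval Fv G) =
      aeval (fun i => MvPolynomial.map (t : A →+* k) (Fv i))
        (MvPolynomial.map (t : A →+* k) G) := by
  induction G using MvPolynomial.induction_on with
  | C a => simp [aeval_C, map_C, algebraMap_eq]
  | add p q hp hq => simp only [map_add, hp, hq]
  | mul_X p i hp => simp only [map_mul, hp, map_X, aeval_X]

end Aux


section Aux2
variable {k : Type} [Field k]

lemma eval_eq_aeval {σ : Type*} (w : σ → k) (q : MvPolynomial σ k) : eval w q = aeval w q := by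
  rw [aeval_def, Algebra.algebraMap_self]
  rfl

lemma dehom_eq_s18 (n : ℕ) :
    dehom k n = (IsScalarTower.toAlgHom k (MvPolynomial (Fin n) k) (RatFunField k n)).comp
      (aeval (Fin.cons 1 X)) := by
  apply algHom_ext
  intro i
  refine Fin.cases ?_ (fun j => ?_) i <;>
    simp [dehom, zCoord, IsScalarTower.coe_toAlgHom']

lemma eq_zero_of_dehom [Infinite k] {n l : ℕ} {p : MvPolynomial (Fin (n + 1)) k}
    (hp : p.IsHomogeneous l) (h : dehom k n p = 0) : p = 0 := by
  have hinj := IsFractionRing.injective (MvPolynomial (Fin n) k) (RatFunField k n)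
  have hdh : aeval (Fin.cons 1 X) p = (0 : MvPolynomial (Fin n) k) := by
    apply hinj
    rw [dehom_eq_s18] at h
    rw [map_zero]
    simpa using h
  have hX : ((X 0 : MvPolynomial (Fin (n + 1)) k) * p) = 0 := by
    apply ((isHomogeneous_X k 0).mul hp).eq_zero_of_forall_eval_eq_zero
    intro x
    rw [map_mul, eval_X]
    by_cases hx : x 0 = 0
    · rw [hx, zero_mul]
    · have hx2 : x = fun i => x 0 * (Fin.cons (α := fun _ => k) 1
          (fun j => (x 0)⁻¹ * x j.succ) i) := by
        funext i
        refine Fin.cases ?_ (fun j => ?_) i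
        · simp
        · simp only [Fin.cons_succ]
          field_simp
      have hz : eval x p = 0 := by
        conv_lhs => rw [hx2]
        rw [eval_smul_hom hp]
        have hcomp := AlgHom.congr_fun
          (comp_aeval (f := (Fin.cons 1 X : Fin (n + 1) → MvPolynomial (Fin n) k))
            (φ := (aeval (fun j => (x 0)⁻¹ * x j.succ) :
              MvPolynomial (Fin n) k →ₐ[k] k))) p
        have hfc : (fun i => (aeval (fun j => (x 0)⁻¹ * x j.succ) :
              MvPolynomial (Fin n) k →ₐ[k] k)
                ((Fin.cons 1 X : Fin (n + 1) → MvPolynomial (Fin n) k) i)) =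
            Fin.cons (α := fun _ => k) 1 (fun j => (x 0)⁻¹ * x j.succ) := by
          rw [fin_comp_cons]
          simp
        rw [AlgHom.comp_apply, hdh, map_zero, hfc] at hcomp
        rw [eval_eq_aeval, ← hcomp, mul_zero]
      rw [hz, mul_zero]
  rcases mul_eq_zero.mp hX with h1 | h1
  · exact absurd h1 (MvPolynomial.X_ne_zero 0)
  · exact h1

lemma isOpen_ev_ne {S : AffSource k} (b : S.A) : IsOpen {t : S.Pts | t b ≠ 0} := by
  have heq : {t : S.Pts | t b ≠ 0} =
      (fun t : S.Pts => (⟨RingHom.ker (t : S.A →+* k), RingHom.ker_isPrime _⟩ :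
        PrimeSpectrum S.A)) ⁻¹' (PrimeSpectrum.basicOpen b : Set (PrimeSpectrum S.A)) := by
    ext t
    simp [PrimeSpectrum.basicOpen, RingHom.mem_ker]
    exact Iff.rfl
  rw [heq]
  exact (PrimeSpectrum.basicOpen b).2.preimage continuous_induced_dom

end Aux2

section Aux3
variable {k : Type} [Field k]

lemma key_family [Infinite k] {n : ℕ} {S : AffSource k} {φ : S.Pts → Cremona k n} {a : S.A}
    {l : ℕ} {F : Fin (n + 1) → MvPolynomial (Fin (n + 1)) S.A}
    (hF : IsFamilyOn k n S φ a l F) (f : Cremona k n) :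
    ∃ c : Fin n → MvPolynomial (Fin n) S.A,
      ∀ t : S.Pts, t a ≠ 0 →
        ((φ t) * f = f * (φ t) ↔ ∀ j, MvPolynomial.map (t : S.A →+* k) (c j) = 0) := by
  classical
  obtain ⟨hFhom, hfam⟩ := hF
  set R : Type := MvPolynomial (Fin n) k with hR
  set K : Type := RatFunField k n with hK
  set ψ : R →ₐ[k] K := IsScalarTower.toAlgHom k R K with hpsi
  have hψinj : Function.Injective ψ := IsFractionRing.injective R K
  -- polynomial representation of f
  have hrep : ∀ j : Fin n, ∃ x : R × (nonZeroDivisors R),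
      f (zCoord k n j) * algebraMap R K (x.2 : R) = algebraMap R K x.1 :=
    fun j => IsLocalization.surj _ _
  choose pq hpq using hrep
  set p : Fin n → R := fun j => (pq j).1 with hp'
  set q : Fin n → R := fun j => ((pq j).2 : R) with hq'
  have hq0 : ∀ j, q j ≠ 0 := fun j => nonZeroDivisors.ne_zero (pq j).2.2
  set Q : R := ∏ j, q j with hQ'
  set Qe : Fin n → R := fun j => ∏ i ∈ Finset.univ.erase j, q i with hQe'
  have hQmul : ∀ j, q j * Qe j = Q := fun j =>
    Finset.mul_prod_erase Finset.univ q (Finset.mem_univ j)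
  have hQ0 : Q ≠ 0 := Finset.prod_ne_zero_iff.mpr fun j _ => hq0 j
  set N : ℕ := Finset.univ.sup fun j => max (p j).totalDegree (q j).totalDegree with hN'
  have hsup : ∀ j : Fin n, max (p j).totalDegree (q j).totalDegree ≤ N := fun j =>
    Finset.le_sup (f := fun j => max (p j).totalDegree (q j).totalDegree) (Finset.mem_univ j)
  have hpdeg : ∀ j, (p j).totalDegree ≤ N := fun j =>
    le_trans (le_max_left _ _) (hsup j)
  have hqdeg : ∀ j, (q j).totalDegree ≤ N := fun j =>
    le_trans (le_max_right _ _) (hsup j)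
  choose Hp Hphom Hpdh using fun j => exists_homogenization (p j) (hpdeg j)
  choose Hq Hqhom Hqdh using fun j => exists_homogenization (q j) (hqdeg j)
  -- A-coefficient polynomials
  set A : Type := S.A with hA
  set mk : MvPolynomial (Fin n) k →+* MvPolynomial (Fin n) A :=
    MvPolynomial.map (algebraMap k A) with hmk
  set mk1 : MvPolynomial (Fin (n + 1)) k →+* MvPolynomial (Fin (n + 1)) A :=
    MvPolynomial.map (algebraMap k A) with hmk1
  set vA : Fin (n + 1) → MvPolynomial (Fin n) A :=
    Fin.cons (mk Q) (fun j => mk (Qe j * p j)) with hvA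
  set W : Fin (n + 1) → MvPolynomial (Fin n) A := fun i => aeval vA (F i) with hW
  set P : Fin n → MvPolynomial (Fin (n + 1)) A := fun j => aeval F (mk1 (Hp j)) with hP
  set P' : Fin n → MvPolynomial (Fin (n + 1)) A := fun j => aeval F (mk1 (Hq j)) with hP2
  set dhA : MvPolynomial (Fin (n + 1)) A →ₐ[A] MvPolynomial (Fin n) A :=
    aeval (Fin.cons 1 X) with hdhA
  refine ⟨fun j => dhA (P j) * W 0 - W j.succ * dhA (P' j), ?_⟩
  intro t ht
  obtain ⟨hex, hgz⟩ := hfam t ht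
  set g : Cremona k n := φ t with hg
  set u : Fin (n + 1) → K := fun i => dehom k n (MvPolynomial.map (t : A →+* k) (F i)) with hu
  set gz : Fin n → K := fun j => g (zCoord k n j) with hgz'
  set fz : Fin n → K := fun j => f (zCoord k n j) with hfz'
  have hgzu : ∀ j : Fin n, gz j * u 0 = u j.succ := fun j => hgz j
  -- u 0 ≠ 0
  have hs0 : u 0 ≠ 0 := by
    intro h0
    obtain ⟨i0, hi0⟩ := hex
    apply hi0
    apply eq_zero_of_dehom ((hFhom i0).map (t : A →+* k))
    have hall : ∀ i, u i = 0 := by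
      intro i
      refine Fin.cases h0 (fun j => ?_) i
      rw [← hgzu j, h0, mul_zero]
    exact hall i0
  -- generator rules
  have grule : ∀ r : R, g (ψ r) = aeval gz r := by
    intro r
    have hcomp : (g.toAlgHom.comp ψ) = aeval gz := by
      apply algHom_ext
      intro j
      simp only [AlgHom.comp_apply, aeval_X]
      rfl
    exact AlgHom.congr_fun hcomp r
  have frule : ∀ r : R, f (ψ r) = aeval fz r := by
    intro r
    have hcomp : (f.toAlgHom.comp ψ) = aeval fz := by
      apply algHom_ext
      intro j
      simp only [AlgHom.comp_apply, aeval_X]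
      rfl
    exact AlgHom.congr_fun hcomp r
  -- main evaluation chain
  have Echain : ∀ (r : R) (hr : MvPolynomial (Fin (n + 1)) k), hr.IsHomogeneous N →
      aeval (Fin.cons 1 X) hr = r →
      (u 0) ^ N * aeval gz r =
        ψ (MvPolynomial.map (t : A →+* k) (dhA (aeval F (mk1 hr)))) := by
    intro r hr hrhom hrdh
    have h1 : aeval u hr = (u 0) ^ N * aeval gz r := by
      have hu' : u = fun i => (u 0) * (Fin.cons (α := fun _ => K) 1 gz i) := by
        funext i
        refine Fin.cases ?_ (fun j => ?_) i
        · simp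
        · rw [Fin.cons_succ, ← hgzu j, mul_comm]
      conv_lhs => rw [hu']
      rw [aeval_smul_hom hrhom]
      congr 1
      have hcomp := AlgHom.congr_fun
        (comp_aeval (f := (Fin.cons 1 X : Fin (n + 1) → MvPolynomial (Fin n) k))
          (φ := (aeval gz : MvPolynomial (Fin n) k →ₐ[k] K))) hr
      have hfc : (fun i => (aeval gz : MvPolynomial (Fin n) k →ₐ[k] K)
            ((Fin.cons 1 X : Fin (n + 1) → MvPolynomial (Fin n) k) i)) =
          Fin.cons (α := fun _ => K) 1 gz := by
        rw [fin_comp_cons]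
        simp
      rw [AlgHom.comp_apply, hrdh, hfc] at hcomp
      exact hcomp.symm
    have h3 : MvPolynomial.map (t : A →+* k) (aeval F (mk1 hr)) =
        aeval (fun i => MvPolynomial.map (t : A →+* k) (F i)) hr := by
      rw [map_aeval_comm, hmk1, map_mapk t hr]
    have hfc1 : (fun i => MvPolynomial.map (t : A →+* k)
          ((Fin.cons (α := fun _ => MvPolynomial (Fin n) A) 1 X) i)) =
        (Fin.cons (α := fun _ => MvPolynomial (Fin n) k) 1 X) := by
      rw [fin_comp_cons (MvPolynomial.map (t : A →+* k))]
      simp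
    have h4 : MvPolynomial.map (t : A →+* k) (dhA (aeval F (mk1 hr))) =
        aeval (Fin.cons 1 X) (MvPolynomial.map (t : A →+* k) (aeval F (mk1 hr))) := by
      rw [hdhA, map_aeval_comm, hfc1]
    have h5 : ∀ G' : MvPolynomial (Fin (n + 1)) k,
        ψ (aeval (Fin.cons 1 X) G') = dehom k n G' := by
      intro G'
      rw [dehom_eq_s18]
      rfl
    have h2 : aeval u hr = ψ (MvPolynomial.map (t : A →+* k) (dhA (aeval F (mk1 hr)))) := by
      rw [h4, h5, h3]
      have hcomp := AlgHom.congr_fun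
        (comp_aeval (f := fun i => MvPolynomial.map (t : A →+* k) (F i))
          (φ := dehom k n)) hr
      rw [AlgHom.comp_apply] at hcomp
      rw [hcomp]
    rw [← h1, h2]
  -- E3 : clearing denominators on the f-side
  have E3 : ∀ i, f (u i) * (ψ Q) ^ l = ψ (MvPolynomial.map (t : A →+* k) (W i)) := by
    intro i
    have h6 : f (u i) = aeval (Fin.cons (α := fun _ => K) 1 fz)
        (MvPolynomial.map (t : A →+* k) (F i)) := by
      have hcomp := AlgHom.congr_fun
        (comp_aeval (f := (Fin.cons (α := fun _ => RatFunField k n) 1 (zCoord k n))) (φ := f.toAlgHom))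
        (MvPolynomial.map (t : A →+* k) (F i))
      rw [AlgHom.comp_apply] at hcomp
      have hfc : (fun i' => f.toAlgHom
            ((Fin.cons (α := fun _ => RatFunField k n) 1 (zCoord k n)) i')) =
          Fin.cons (α := fun _ => K) 1 fz := by
        rw [fin_comp_cons]
        simp
        rfl
      rw [hfc] at hcomp
      exact hcomp
    rw [h6, mul_comm, ← aeval_smul_hom ((hFhom i).map (t : A →+* k)) (ψ Q)
      (Fin.cons (α := fun _ => K) 1 fz)]
    have h7 : (fun i' => ψ Q * Fin.cons (α := fun _ => K) 1 fz i') =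
        fun i' => ψ (Fin.cons (α := fun _ => R) Q (fun j => Qe j * p j) i') := by
      funext i'
      refine Fin.cases ?_ (fun j => ?_) i'
      · simp
      · simp only [Fin.cons_succ]
        rw [map_mul]
        calc ψ Q * fz j = ψ (q j * Qe j) * fz j := by rw [hQmul j]
          _ = ψ (Qe j) * (fz j * ψ (q j)) := by rw [map_mul]; ring
          _ = ψ (Qe j) * ψ (p j) := by rw [show fz j * ψ (q j) = ψ (p j) from hpq j]
    rw [h7]
    have h8 : MvPolynomial.map (t : A →+* k) (W i) =
        aeval (Fin.cons (α := fun _ => R) Q (fun j => Qe j * p j))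
          (MvPolynomial.map (t : A →+* k) (F i)) := by
      have hvk : (fun i' => MvPolynomial.map (t : A →+* k) (vA i')) =
          Fin.cons (α := fun _ => R) Q (fun j => Qe j * p j) := by
        funext i'
        refine Fin.cases ?_ (fun j => ?_) i'
        · rw [hvA]
          simp only [Fin.cons_zero, hmk]
          exact map_mapk t Q
        · rw [hvA]
          simp only [Fin.cons_succ, hmk]
          exact map_mapk t _
      rw [hW]
      simp only []
      rw [map_aeval_comm, hvk]
    rw [h8]
    have hcomp := AlgHom.congr_fun
      (comp_aeval (f := (Fin.cons (α := fun _ => R) Q (fun j => Qe j * p j)))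
        (φ := ψ)) (MvPolynomial.map (t : A →+* k) (F i))
    rw [AlgHom.comp_apply] at hcomp
    rw [← hcomp]
  -- nonvanishing
  have hψQ : ψ Q ≠ 0 := fun h => hQ0 (hψinj (by rw [h, map_zero]))
  have hQL : (ψ Q) ^ l ≠ 0 := pow_ne_zero _ hψQ
  have hsN : (u 0) ^ N ≠ 0 := pow_ne_zero _ hs0
  have hfs : f (u 0) ≠ 0 := fun h => hs0 (f.injective (by rw [h, map_zero]))
  -- commutation criterion
  have hcrit : (g * f = f * g) ↔ ∀ j, g (fz j) = f (gz j) := by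
    constructor
    · intro h j
      have h' := congrArg (fun e : Cremona k n => e (zCoord k n j)) h
      simpa [AlgEquiv.mul_apply] using h'
    · intro h
      apply AlgEquiv.ext
      intro x
      rw [AlgEquiv.mul_apply, AlgEquiv.mul_apply]
      have hhom : ((g.toAlgHom.comp f.toAlgHom : K →ₐ[k] K) : K →+* K) =
          ((f.toAlgHom.comp g.toAlgHom : K →ₐ[k] K) : K →+* K) := by
        apply IsLocalization.ringHom_ext (nonZeroDivisors R)
        apply MvPolynomial.ringHom_ext
        · intro b
          have hCb : algebraMap R K (MvPolynomial.C b) = algebraMap k K b := by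
            rw [IsScalarTower.algebraMap_apply k R K b, MvPolynomial.algebraMap_eq]
          simp only [RingHom.comp_apply, AlgHom.coe_ringHom_mk, AlgHom.coe_comp,
            Function.comp_apply, AlgHom.coe_coe, AlgEquiv.toAlgHom_eq_coe]
          rw [hCb]
          simp [AlgEquiv.commutes]
        · intro i
          simp only [RingHom.comp_apply, AlgHom.coe_comp, Function.comp_apply,
            AlgHom.coe_coe, AlgEquiv.toAlgHom_eq_coe]
          exact h i
      exact RingHom.congr_fun hhom x
  rw [hcrit]
  refine forall_congr' fun j => ?_
  -- per-coordinate equivalence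
  have hBg : g (ψ (q j)) = aeval gz (q j) := grule (q j)
  have hBne : aeval gz (q j) ≠ 0 := by
    rw [← hBg]
    intro hh
    exact hq0 j (hψinj (g.injective (by rw [hh, map_zero, map_zero])))
  have A1 : g (fz j) * aeval gz (q j) = aeval gz (p j) := by
    have hc := congrArg g (hpq j)
    rw [map_mul] at hc
    rw [← grule, ← grule]
    exact hc
  have A2 : f (gz j) * f (u 0) = f (u j.succ) := by
    have hc := congrArg f (hgzu j)
    rw [map_mul] at hc
    exact hc
  have E2p := Echain (p j) (Hp j) (Hphom j) (Hpdh j)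
  have E2q := Echain (q j) (Hq j) (Hqhom j) (Hqdh j)
  have E30 := E3 0
  have E3j := E3 j.succ
  constructor
  · intro h
    rw [map_sub, sub_eq_zero]
    apply hψinj
    simp only [map_mul]
    rw [← E2p, ← E30, ← E3j, ← E2q, ← A1, ← A2, h]
    ring
  · intro h
    have h0 : MvPolynomial.map (t : A →+* k) (dhA (P j) * W 0) =
        MvPolynomial.map (t : A →+* k) (W j.succ * dhA (P' j)) := by
      rw [map_sub] at h
      exact sub_eq_zero.mp h
    have h2 : ψ (MvPolynomial.map (t : A →+* k) (dhA (P j))) *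
          ψ (MvPolynomial.map (t : A →+* k) (W 0)) =
        ψ (MvPolynomial.map (t : A →+* k) (W j.succ)) *
          ψ (MvPolynomial.map (t : A →+* k) (dhA (P' j))) := by
      have hc := congrArg ψ h0
      simpa only [map_mul] using hc
    rw [← E2p, ← E30, ← E3j, ← E2q, ← A1, ← A2] at h2
    have hbig : (u 0) ^ N * aeval gz (q j) * f (u 0) * (ψ Q) ^ l ≠ 0 :=
      mul_ne_zero (mul_ne_zero (mul_ne_zero hsN hBne) hfs) hQL
    apply mul_left_cancel₀ hbig
    linear_combination h2

end Aux3

/-- The centralizer of an element of `Bir(ℙⁿ)` is closed in the Zariski topology;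
consequently the centralizer of any subgroup of `Bir(ℙⁿ)` is closed. -/
theorem centralizer_isClosed (k : Type) [Field k] [IsAlgClosed k] (n : ℕ) (hn : 1 ≤ n) :
    (∀ f : Cremona k n, IsClosed {g : Cremona k n | g * f = f * g}) ∧
    ∀ G : Subgroup (Cremona k n),
      IsClosed ((Subgroup.centralizer (G : Set (Cremona k n))) : Set (Cremona k n)) := by
  have part1 : ∀ f : Cremona k n, IsClosed {g : Cremona k n | g * f = f * g} := by
    intro f
    refine isClosed_iSup_iff.mpr fun S => isClosed_iSup_iff.mpr fun φp => ?_
    refine isClosed_coinduced.mpr ?_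
    obtain ⟨φ, hφ⟩ := φp
    rw [← isOpen_compl_iff, isOpen_iff_forall_mem_open]
    intro t0 ht0
    obtain ⟨a, ha, l, F, hF⟩ := hφ t0
    obtain ⟨c, hc⟩ := key_family hF f
    have hnc : ¬(φ t0 * f = f * φ t0) := by simpa using ht0
    have hex : ∃ j, MvPolynomial.map (t0 : S.A →+* k) (c j) ≠ 0 := by
      by_contra hno
      push_neg at hno
      exact hnc ((hc t0 ha).mpr hno)
    obtain ⟨j, hj⟩ := hex
    obtain ⟨m, hm⟩ := MvPolynomial.ne_zero_iff.mp hj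
    rw [MvPolynomial.coeff_map] at hm
    refine ⟨{t : S.Pts | t a ≠ 0} ∩ {t : S.Pts | t (MvPolynomial.coeff m (c j)) ≠ 0}, ?_,
      (isOpen_ev_ne a).inter (isOpen_ev_ne _), ⟨ha, hm⟩⟩
    rintro t ⟨hta, htc⟩
    simp only [Set.mem_compl_iff, Set.mem_preimage, Set.mem_setOf_eq]
    intro hcomm
    apply htc
    have hz := (hc t hta).mp hcomm j
    have hcf : t (MvPolynomial.coeff m (c j)) =
        MvPolynomial.coeff m (MvPolynomial.map (t : S.A →+* k) (c j)) :=
      (MvPolynomial.coeff_map _ _ _).symm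
    rw [hcf, hz, MvPolynomial.coeff_zero]
  refine ⟨part1, fun G => ?_⟩
  have hset : ((Subgroup.centralizer (G : Set (Cremona k n))) : Set (Cremona k n)) =
      ⋂ h ∈ (G : Set (Cremona k n)), {g : Cremona k n | g * h = h * g} := by
    ext g
    simp only [SetLike.mem_coe, Subgroup.mem_centralizer_iff, Set.mem_iInter, Set.mem_setOf_eq]
    constructor
    · intro hg h hh
      exact (hg h hh).symm
    · intro hg h hh
      exact (hg h hh).symm
  rw [hset]
  exact isClosed_biInter fun h _ => part1 h
end
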